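/- arXiv:2412.09969 — 5 statements merged into one kernel-verified Lean document; each statement's English description precedes it below -/
import Mathlib

section
/- For k ≥ 3, the k-prism graph has injective chromatic number equal to 3 if and only if k is divisible by 3 (and otherwise its injective chromatic number is 4, i.e., it has an injective 3-colouring if and only if 3 divides k). -/
/-- `c` is an injective colouring of `G`: any two distinct vertices sharing a
common neighbour receive different colours. -/
def IsInjColoring {V α : Type} (G : SimpleGraph V) (c : V → α) : Prop :=
  ∀ u v : V, u ≠ v → (∃ w, G.Adj u w ∧ G.Adj v w) → c u ≠ c v

/-- The injective chromatic number of `G`, as an extended natural number. -/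
noncomputable def injChrom {V : Type} (G : SimpleGraph V) : ℕ∞ :=
  ⨅ n ∈ {n : ℕ | ∃ c : V → Fin n, IsInjColoring G c}, (n : ℕ∞)

/-- The `k`-prism: two `k`-cycles `u_0…u_{k−1}`, `v_0…v_{k−1}` (encoded as
`(i, 0)` and `(i, 1)`) together with the rungs `u_i v_i`. -/
def prism (k : ℕ) : SimpleGraph (Fin k × Fin 2) where
  Adj x y :=
    (x.2 = y.2 ∧ x.1 ≠ y.1 ∧
      (y.1.val = (x.1.val + 1) % k ∨ x.1.val = (y.1.val + 1) % k)) ∨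
    (x.1 = y.1 ∧ x.2 ≠ y.2)
  symm := by
    refine ⟨?_⟩
    rintro ⟨i, a⟩ ⟨j, b⟩ (⟨h1, h2, h3⟩ | ⟨h1, h2⟩)
    · exact Or.inl ⟨h1.symm, h2.symm, h3.symm⟩
    · exact Or.inr ⟨h1.symm, h2.symm⟩
  loopless := by
    refine ⟨?_⟩
    rintro ⟨i, a⟩ (⟨-, h, -⟩ | ⟨-, h⟩) <;> exact h rfl

namespace PrismAux

lemma prism_adj_iff {k : ℕ} (x y : Fin k × Fin 2) :
    (prism k).Adj x y ↔
      ((x.2 = y.2 ∧ x.1 ≠ y.1 ∧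
        (y.1.val = (x.1.val + 1) % k ∨ x.1.val = (y.1.val + 1) % k)) ∨
      (x.1 = y.1 ∧ x.2 ≠ y.2)) := Iff.rfl

/-- successor index -/
def S (k i : ℕ) : ℕ := if i + 1 = k then 0 else i + 1
/-- predecessor index -/
def P (k i : ℕ) : ℕ := if i = 0 then k - 1 else i - 1

lemma mod_succ {k a : ℕ} (ha : a < k) : (a + 1) % k = S k a := by
  unfold S
  rcases Nat.lt_or_ge (a + 1) k with h | h
  · rw [Nat.mod_eq_of_lt h, if_neg (by omega)]
  · have h' : a + 1 = k := by omega
    have h0 : (a + 1) % k = 0 := by rw [h']; exact Nat.mod_self k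
    rw [h0, if_pos h']

lemma S_lt {k a : ℕ} (hk : 0 < k) (ha : a < k) : S k a < k := by unfold S; split <;> omega
lemma P_lt {k a : ℕ} (hk : 0 < k) (ha : a < k) : P k a < k := by unfold P; split <;> omega

lemma adj_cases {k : ℕ} (hk : 3 ≤ k) {x w : Fin k × Fin 2} (h : (prism k).Adj x w) :
    (x.1.val = S k w.1.val ∧ x.2 = w.2) ∨ (x.1.val = P k w.1.val ∧ x.2 = w.2) ∨
      (x.1 = w.1 ∧ x.2 ≠ w.2) := by
  rw [prism_adj_iff] at h
  rcases h with ⟨h1, h2, h3 | h3⟩ | ⟨h1, h2⟩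
  · right; left
    refine ⟨?_, h1⟩
    rw [mod_succ x.1.isLt] at h3
    have hx := x.1.isLt
    have hw := w.1.isLt
    unfold S at h3; unfold P
    split at h3 <;> split <;> omega
  · left
    rw [mod_succ w.1.isLt] at h3
    exact ⟨h3, h1⟩
  · right; right; exact ⟨h1, h2⟩

lemma fin2 (s : Fin 2) : s = 0 ∨ s = 1 := by omega

lemma adj_succ' {k : ℕ} (hk : 3 ≤ k) (n : ℕ) (s : Fin 2) :
    (prism k).Adj (⟨(n + 1) % k, Nat.mod_lt _ (by omega)⟩, s) (⟨n % k, Nat.mod_lt _ (by omega)⟩, s) := by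
  rw [prism_adj_iff]
  have hj : n % k < k := Nat.mod_lt _ (by omega)
  have he : (n + 1) % k = (n % k + 1) % k := (Nat.mod_add_mod n k 1).symm
  left
  refine ⟨rfl, ?_, Or.inr he⟩
  simp only [ne_eq, Fin.mk.injEq]
  rw [he, mod_succ hj]
  unfold S; split <;> omega

lemma adj_rung' {k : ℕ} (hk : 3 ≤ k) (m : ℕ) (hm : m < k) (s t : Fin 2) (hst : t ≠ s) :
    (prism k).Adj (⟨m, hm⟩, t) (⟨m, hm⟩, s) := by
  rw [prism_adj_iff]; exact Or.inr ⟨rfl, hst⟩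

end PrismAux

namespace PrismAux

lemma flip0 {a b : Fin 2} (h : a ≠ b) (hb : b = 0) : a = 1 := by omega
lemma flip1 {a b : Fin 2} (h : a ≠ b) (hb : b = 1) : a = 0 := by omega
lemma fin2_eq {a b c : Fin 2} (ha : a ≠ c) (hb : b ≠ c) : a = b := by omega

lemma builder {k : ℕ} (hk : 3 ≤ k) {n : ℕ} (f g : ℕ → Fin n)
    (h1 : ∀ i < k, f (S k i) ≠ f (P k i))
    (h2 : ∀ i < k, g (S k i) ≠ g (P k i))
    (h3 : ∀ i < k, f (S k i) ≠ g i)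
    (h4 : ∀ i < k, f (P k i) ≠ g i)
    (h5 : ∀ i < k, g (S k i) ≠ f i)
    (h6 : ∀ i < k, g (P k i) ≠ f i) :
    IsInjColoring (prism k) (fun x => if x.2 = 0 then f x.1.val else g x.1.val) := by
  rintro u v hne ⟨w, hu, hv⟩
  have cu := adj_cases hk hu
  have cv := adj_cases hk hv
  have hwlt := w.1.isLt
  dsimp only
  rcases cu with ⟨hu1, hu2⟩ | ⟨hu1, hu2⟩ | ⟨hu1, hu2⟩ <;>
    rcases cv with ⟨hv1, hv2⟩ | ⟨hv1, hv2⟩ | ⟨hv1, hv2⟩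
  -- succ / succ
  · exact absurd (Prod.ext (Fin.ext (hu1.trans hv1.symm)) (hu2.trans hv2.symm)) hne
  -- succ / pred
  · rcases fin2 w.2 with hw | hw
    · rw [hu1, hv1, if_pos (hu2.trans hw), if_pos (hv2.trans hw)]
      exact h1 _ hwlt
    · rw [hu1, hv1, if_neg (by rw [hu2.trans hw]; exact one_ne_zero),
        if_neg (by rw [hv2.trans hw]; exact one_ne_zero)]
      exact h2 _ hwlt
  -- succ / rung
  · rcases fin2 w.2 with hw | hw
    · rw [hu1, hv1, if_pos (hu2.trans hw), if_neg (by rw [flip0 hv2 hw]; exact one_ne_zero)]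
      exact h3 _ hwlt
    · rw [hu1, hv1, if_neg (by rw [hu2.trans hw]; exact one_ne_zero),
        if_pos (flip1 hv2 hw)]
      exact h5 _ hwlt
  -- pred / succ
  · rcases fin2 w.2 with hw | hw
    · rw [hu1, hv1, if_pos (hu2.trans hw), if_pos (hv2.trans hw)]
      exact (h1 _ hwlt).symm
    · rw [hu1, hv1, if_neg (by rw [hu2.trans hw]; exact one_ne_zero),
        if_neg (by rw [hv2.trans hw]; exact one_ne_zero)]
      exact (h2 _ hwlt).symm
  -- pred / pred
  · exact absurd (Prod.ext (Fin.ext (hu1.trans hv1.symm)) (hu2.trans hv2.symm)) hne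
  -- pred / rung
  · rcases fin2 w.2 with hw | hw
    · rw [hu1, hv1, if_pos (hu2.trans hw), if_neg (by rw [flip0 hv2 hw]; exact one_ne_zero)]
      exact h4 _ hwlt
    · rw [hu1, hv1, if_neg (by rw [hu2.trans hw]; exact one_ne_zero),
        if_pos (flip1 hv2 hw)]
      exact h6 _ hwlt
  -- rung / succ
  · rcases fin2 w.2 with hw | hw
    · rw [hu1, hv1, if_neg (by rw [flip0 hu2 hw]; exact one_ne_zero), if_pos (hv2.trans hw)]
      exact (h3 _ hwlt).symm
    · rw [hu1, hv1, if_pos (flip1 hu2 hw),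
        if_neg (by rw [hv2.trans hw]; exact one_ne_zero)]
      exact (h5 _ hwlt).symm
  -- rung / pred
  · rcases fin2 w.2 with hw | hw
    · rw [hu1, hv1, if_neg (by rw [flip0 hu2 hw]; exact one_ne_zero), if_pos (hv2.trans hw)]
      exact (h4 _ hwlt).symm
    · rw [hu1, hv1, if_pos (flip1 hu2 hw),
        if_neg (by rw [hv2.trans hw]; exact one_ne_zero)]
      exact (h6 _ hwlt).symm
  -- rung / rung
  · exact absurd (Prod.ext (hu1.trans hv1.symm) (fin2_eq hu2 hv2)) hne

end PrismAux

namespace PrismAux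

lemma exists3 {k : ℕ} (hk : 3 ≤ k) (hd : 3 ∣ k) :
    ∃ c : Fin k × Fin 2 → Fin 3, IsInjColoring (prism k) c := by
  set f : ℕ → Fin 3 := fun i => ⟨i % 3, Nat.mod_lt _ (by omega)⟩ with hf
  refine ⟨_, builder hk f f ?_ ?_ ?_ ?_ ?_ ?_⟩ <;>
    intro i hi <;>
    · simp only [hf, ne_eq, Fin.mk.injEq, S, P]
      split_ifs <;> omega

lemma exists4 {k : ℕ} (hk : 4 ≤ k) :
    ∃ c : Fin k × Fin 2 → Fin 4, IsInjColoring (prism k) c := by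
  set f : ℕ → Fin 4 := fun i =>
    ⟨(if i < 2 * (k % 4) then (i + 1) / 2 else i - k % 4) % 4, Nat.mod_lt _ (by omega)⟩ with hf
  set g : ℕ → Fin 4 := fun i =>
    ⟨((if i < 2 * (k % 4) then (i + 1) / 2 else i - k % 4) + 2) % 4, Nat.mod_lt _ (by omega)⟩ with hg
  refine ⟨_, builder (by omega) f g ?_ ?_ ?_ ?_ ?_ ?_⟩ <;>
    intro i hi <;>
    · simp only [hf, hg, ne_eq, Fin.mk.injEq, S, P]
      split_ifs <;> omega

end PrismAux

namespace PrismAux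

/-- Potential function on transition states. -/
def FF (a0 b0 a1 b1 : Fin 3) : Fin 3 :=
  ⟨(2 * (a1.val * a1.val + b1.val * b1.val) + a0.val * b1.val + b0.val * a1.val) % 3,
    Nat.mod_lt _ (by omega)⟩

/-- Increment map on `Fin 3`. -/
def inc (x : Fin 3) : Fin 3 := ⟨(x.val + 1) % 3, Nat.mod_lt _ (by omega)⟩

set_option maxRecDepth 100000 in
set_option synthInstance.maxSize 1000 in
lemma key (a0 b0 a1 b1 a2 b2 : Fin 3)
    (Hin : ∃ x y : Fin 3, x ≠ a1 ∧ b0 ≠ x ∧ b0 ≠ a1 ∧ y ≠ b1 ∧ a0 ≠ y ∧ a0 ≠ b1)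
    (Hmid : a0 ≠ a2 ∧ b0 ≠ b2 ∧ b1 ≠ a0 ∧ b1 ≠ a2 ∧ a1 ≠ b0 ∧ a1 ≠ b2)
    (Hout : ∃ z w : Fin 3, a1 ≠ z ∧ b2 ≠ a1 ∧ b2 ≠ z ∧ b1 ≠ w ∧ a2 ≠ b1 ∧ a2 ≠ w) :
    FF a1 b1 a2 b2 = inc (FF a0 b0 a1 b1) := by
  revert Hin Hmid Hout
  revert a0 b0 a1 b1 a2 b2
  decide

end PrismAux

namespace PrismAux

lemma mod_add_ne {k : ℕ} (hk : 3 ≤ k) (n m : ℕ) (hm1 : 0 < m) (hm2 : m ≤ 2) :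
    (n + m) % k ≠ n % k := by
  intro h
  have e : (n % k + m) % k = n % k := by rw [Nat.mod_add_mod]; exact h
  have hjk : n % k < k := Nat.mod_lt _ (by omega)
  rcases Nat.lt_or_ge (n % k + m) k with h2 | h2
  · rw [Nat.mod_eq_of_lt h2] at e; omega
  · rw [Nat.mod_eq_sub_mod h2, Nat.mod_eq_of_lt (by omega)] at e; omega

lemma cross_ne {k : ℕ} (x y : Fin k) (s t : Fin 2) (hst : s ≠ t) :
    (x, s) ≠ (y, t) := fun h => hst (congrArg Prod.snd h)

lemma three_col_dvd {k : ℕ} (hk : 3 ≤ k) (c : Fin k × Fin 2 → Fin 3)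
    (hc : IsInjColoring (prism k) c) : 3 ∣ k := by
  have hk0 : 0 < k := by omega
  set A : ℕ → Fin 3 := fun m => c (⟨m % k, Nat.mod_lt _ hk0⟩, 0) with hA
  set B : ℕ → Fin 3 := fun m => c (⟨m % k, Nat.mod_lt _ hk0⟩, 1) with hB
  have hCon : ∀ n : ℕ, A n ≠ A (n+2) ∧ B n ≠ B (n+2) ∧ B (n+1) ≠ A n ∧
      B (n+1) ≠ A (n+2) ∧ A (n+1) ≠ B n ∧ A (n+1) ≠ B (n+2) := by
    intro n
    have hadj1 : ∀ s : Fin 2, (prism k).Adj (⟨n % k, Nat.mod_lt _ hk0⟩, s)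
        (⟨(n+1) % k, Nat.mod_lt _ hk0⟩, s) := fun s => (adj_succ' hk n s).symm
    have hadj2 : ∀ s : Fin 2, (prism k).Adj (⟨(n+2) % k, Nat.mod_lt _ hk0⟩, s)
        (⟨(n+1) % k, Nat.mod_lt _ hk0⟩, s) := fun s => adj_succ' hk (n+1) s
    have hadj3 : ∀ s t : Fin 2, t ≠ s → (prism k).Adj (⟨(n+1) % k, Nat.mod_lt _ hk0⟩, t)
        (⟨(n+1) % k, Nat.mod_lt _ hk0⟩, s) := fun s t h => adj_rung' hk _ _ s t h
    have hne02 : ((⟨n % k, Nat.mod_lt _ hk0⟩ : Fin k), (0 : Fin 2)) ≠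
        (⟨(n+2) % k, Nat.mod_lt _ hk0⟩, (0 : Fin 2)) := by
      intro h
      exact mod_add_ne hk n 2 (by omega) (by omega)
        (congrArg (fun p => (Prod.fst p : Fin k).val) h).symm
    have hne02' : ((⟨n % k, Nat.mod_lt _ hk0⟩ : Fin k), (1 : Fin 2)) ≠
        (⟨(n+2) % k, Nat.mod_lt _ hk0⟩, (1 : Fin 2)) := by
      intro h
      exact mod_add_ne hk n 2 (by omega) (by omega)
        (congrArg (fun p => (Prod.fst p : Fin k).val) h).symm
    refine ⟨?_, ?_, ?_, ?_, ?_, ?_⟩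
    · exact hc _ _ hne02 ⟨_, hadj1 0, hadj2 0⟩
    · exact hc _ _ hne02' ⟨_, hadj1 1, hadj2 1⟩
    · exact hc _ _ (cross_ne _ _ _ _ (by decide)) ⟨_, hadj3 0 1 (by decide), hadj1 0⟩
    · exact hc _ _ (cross_ne _ _ _ _ (by decide)) ⟨_, hadj3 0 1 (by decide), hadj2 0⟩
    · exact hc _ _ (cross_ne _ _ _ _ (by decide)) ⟨_, hadj3 1 0 (by decide), hadj1 1⟩
    · exact hc _ _ (cross_ne _ _ _ _ (by decide)) ⟨_, hadj3 1 0 (by decide), hadj2 1⟩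
  have hpA : ∀ m, A (m + k) = A m := by
    intro m; simp only [hA, Nat.add_mod_right]
  have hpB : ∀ m, B (m + k) = B m := by
    intro m; simp only [hB, Nat.add_mod_right]
  have hstep : ∀ n, FF (A (n+1)) (B (n+1)) (A (n+2)) (B (n+2)) =
      inc (FF (A n) (B n) (A (n+1)) (B (n+1))) := by
    intro n
    obtain ⟨c1, c2, c3, c4, c5, c6⟩ := hCon (n + k - 1)
    have e1 : n + k - 1 + 1 = n + k := by omega
    have e2 : n + k - 1 + 2 = n + 1 + k := by omega
    rw [e2, hpA (n+1)] at c1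
    rw [e2, hpB (n+1)] at c2
    rw [e1, hpB n] at c3
    rw [e1, hpB n, e2, hpA (n+1)] at c4
    rw [e1, hpA n] at c5
    rw [e1, hpA n, e2, hpB (n+1)] at c6
    obtain ⟨d1, d2, d3, d4, d5, d6⟩ := hCon (n + 1)
    exact key _ _ _ _ _ _ ⟨_, _, c1, c3, c4, c2, c5, c6⟩ (hCon n) ⟨_, _, d1, d3, d4, d2, d5, d6⟩
  have hval : ∀ m, (FF (A (m+1)) (B (m+1)) (A (m+2)) (B (m+2))).val =
      ((FF (A 1) (B 1) (A 2) (B 2)).val + m) % 3 := by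
    intro m
    induction m with
    | zero =>
      show (FF (A 1) (B 1) (A 2) (B 2)).val = _
      have := (FF (A 1) (B 1) (A 2) (B 2)).isLt
      omega
    | succ m ih =>
      have h2 := hstep (m+1)
      have e1 : m + 1 + 1 = m + 2 := by omega
      have e2 : m + 1 + 2 = m + 3 := by omega
      rw [e1, e2] at h2 ⊢
      rw [h2]
      simp only [inc]
      have := (FF (A 1) (B 1) (A 2) (B 2)).isLt
      omega
  have hfin := hval k
  have pA : ∀ m, A (k + m) = A m := fun m => by rw [Nat.add_comm]; exact hpA m
  have pB : ∀ m, B (k + m) = B m := fun m => by rw [Nat.add_comm]; exact hpB m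
  rw [pA 1, pA 2, pB 1, pB 2] at hfin
  have := (FF (A 1) (B 1) (A 2) (B 2)).isLt
  have hmod : k % 3 = 0 := by omega
  exact Nat.dvd_of_mod_eq_zero hmod

lemma three_le {k n : ℕ} (hk : 3 ≤ k) (c : Fin k × Fin 2 → Fin n)
    (hc : IsInjColoring (prism k) c) : 3 ≤ n := by
  have h1k : 1 < k := by omega
  set w : Fin k × Fin 2 := (⟨0, by omega⟩, 0) with hw
  set x1 : Fin k × Fin 2 := (⟨1, by omega⟩, 0) with hx1
  set x2 : Fin k × Fin 2 := (⟨k - 1, by omega⟩, 0) with hx2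
  set x3 : Fin k × Fin 2 := (⟨0, by omega⟩, 1) with hx3
  have a1 : (prism k).Adj x1 w := by
    rw [prism_adj_iff]
    refine Or.inl ⟨rfl, ?_, Or.inr ?_⟩
    · simp [hx1, hw, Fin.ext_iff]
    · exact (Nat.mod_eq_of_lt h1k).symm
  have a2 : (prism k).Adj x2 w := by
    rw [prism_adj_iff]
    refine Or.inl ⟨rfl, ?_, Or.inl ?_⟩
    · simp [hx2, hw, Fin.ext_iff]; omega
    · show (0 : ℕ) = (k - 1 + 1) % k
      have : k - 1 + 1 = k := by omega
      rw [this, Nat.mod_self]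
  have a3 : (prism k).Adj x3 w := by
    rw [prism_adj_iff]
    exact Or.inr ⟨rfl, (by decide : (1 : Fin 2) ≠ 0)⟩
  have n12 : x1 ≠ x2 := by simp [hx1, hx2, Prod.ext_iff, Fin.ext_iff]; omega
  have n13 : x1 ≠ x3 := by simp [hx1, hx3, Prod.ext_iff, Fin.ext_iff]
  have n23 : x2 ≠ x3 := by simp [hx2, hx3, Prod.ext_iff, Fin.ext_iff]
  have d12 := hc _ _ n12 ⟨w, a1, a2⟩
  have d13 := hc _ _ n13 ⟨w, a1, a3⟩
  have d23 := hc _ _ n23 ⟨w, a2, a3⟩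
  have l1 := (c x1).isLt
  have l2 := (c x2).isLt
  have l3 := (c x3).isLt
  have v12 : (c x1).val ≠ (c x2).val := fun h => d12 (Fin.ext h)
  have v13 : (c x1).val ≠ (c x3).val := fun h => d13 (Fin.ext h)
  have v23 : (c x2).val ≠ (c x3).val := fun h => d23 (Fin.ext h)
  omega

end PrismAux

namespace PrismAux

lemma cast_coloring {V : Type} {G : SimpleGraph V} {n m : ℕ} (h : n ≤ m)
    (c : V → Fin n) (hc : IsInjColoring G c) :
    IsInjColoring G (fun v => Fin.castLE h (c v)) := by
  intro u v huv hw heq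
  exact hc u v huv hw (Fin.castLE_injective h heq)

lemma injChrom_eq {V : Type} (G : SimpleGraph V) (m : ℕ)
    (hex : ∃ c : V → Fin m, IsInjColoring G c)
    (hlb : ∀ n : ℕ, (∃ c : V → Fin n, IsInjColoring G c) → m ≤ n) :
    injChrom G = m := by
  unfold injChrom
  apply le_antisymm
  · exact iInf₂_le m hex
  · refine le_iInf₂ fun n hn => ?_
    exact_mod_cast hlb n hn

end PrismAux


/-- For `k ≥ 3`, the `k`-prism has injective chromatic number 3 if and only if
`3 ∣ k`, and otherwise its injective chromatic number is 4. -/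
theorem prism_injChrom (k : ℕ) (hk : 3 ≤ k) :
    (injChrom (prism k) = 3 ↔ 3 ∣ k) ∧ (¬ 3 ∣ k → injChrom (prism k) = 4) := by
  have part2 : ¬ 3 ∣ k → injChrom (prism k) = 4 := by
    intro hnd
    have hk4 : 4 ≤ k := by omega
    have h4 : injChrom (prism k) = (4 : ℕ) := by
      apply PrismAux.injChrom_eq
      · exact PrismAux.exists4 hk4
      · intro n hn
        by_contra hlt
        obtain ⟨c, hc⟩ := hn
        have hn3 : n ≤ 3 := by omega
        exact hnd (PrismAux.three_col_dvd hk _ (PrismAux.cast_coloring hn3 c hc))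
    exact_mod_cast h4
  refine ⟨⟨?_, ?_⟩, part2⟩
  · intro h3
    by_contra hnd
    have h4 := part2 hnd
    rw [h3] at h4
    norm_num at h4
  · intro hd
    have h3 : injChrom (prism k) = (3 : ℕ) := by
      apply PrismAux.injChrom_eq
      · exact PrismAux.exists3 hk hd
      · intro n hn
        obtain ⟨c, hc⟩ := hn
        exact PrismAux.three_le hk c hc
    exact_mod_cast h3
end

section
/- For r ≥ 5, the generalised dodecahedron D_r admits an injective 3-colouring if and only if r ≡ 0 (mod 3); hence χ_i(D_r) = 4 if and only if r is not divisible by 3. -/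
/-- One orientation of the edges of the generalised dodecahedron `D_r`.
Vertices are encoded as `(i, t)` with `t = 0` for `u_i`, `t = 1` for `v_i`,
`t = 2` for `u'_i` and `t = 3` for `v'_i`; indices are modulo `r`. -/
def dodecRel (r : ℕ) (x y : Fin r × Fin 4) : Prop :=
  (x.2.val = 0 ∧ y.2.val = 0 ∧ y.1.val = (x.1.val + 1) % r) ∨
  (x.2.val = 1 ∧ y.2.val = 1 ∧ y.1.val = (x.1.val + 1) % r) ∨
  (x.2.val = 0 ∧ y.2.val = 2 ∧ y.1 = x.1) ∨
  (x.2.val = 1 ∧ y.2.val = 3 ∧ y.1 = x.1) ∨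
  (x.2.val = 3 ∧ y.2.val = 2 ∧ y.1 = x.1) ∨
  (x.2.val = 2 ∧ y.2.val = 3 ∧ y.1.val = (x.1.val + 1) % r)

/-- The generalised dodecahedron `D_r`. -/
def genDodec (r : ℕ) : SimpleGraph (Fin r × Fin 4) where
  Adj x y := x ≠ y ∧ (dodecRel r x y ∨ dodecRel r y x)
  symm := ⟨by
    rintro x y ⟨h1, h2⟩
    exact ⟨h1.symm, h2.symm⟩⟩
  loopless := ⟨fun x h => h.1 rfl⟩


def dfn (r : ℕ) (h5 : 5 ≤ r) (n : ℕ) : Fin r := ⟨n % r, Nat.mod_lt n (by omega)⟩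

lemma ne1 {r : ℕ} {a b : Fin r} {s t : Fin 4} (h : a ≠ b) : (a,s) ≠ (b,t) :=
  fun h' => h (congrArg Prod.fst h')

lemma ne2 {r : ℕ} {a b : Fin r} {s t : Fin 4} (h : s ≠ t) : (a,s) ≠ (b,t) :=
  fun h' => h (congrArg Prod.snd h')

lemma dfn_succ_val (r : ℕ) (h5 : 5 ≤ r) (n : ℕ) :
    (dfn r h5 (n+1)).val = ((dfn r h5 n).val + 1) % r := by
  show (n+1) % r = (n % r + 1) % r
  rw [Nat.add_mod n 1 r, Nat.mod_eq_of_lt (show 1 < r by omega)]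

lemma dfn_succ_ne (r : ℕ) (h5 : 5 ≤ r) (n : ℕ) : dfn r h5 (n+1) ≠ dfn r h5 n := by
  intro h
  have h' := congrArg Fin.val h
  rw [dfn_succ_val r h5 n] at h'
  have h2 : (dfn r h5 n).val < r := (dfn r h5 n).isLt
  rcases Nat.lt_or_ge ((dfn r h5 n).val + 1) r with h3 | h3
  · rw [Nat.mod_eq_of_lt h3] at h'; omega
  · have h4 : (dfn r h5 n).val + 1 = r := by omega
    rw [h4, Nat.mod_self] at h'; omega

lemma dfn_succ2_ne (r : ℕ) (h5 : 5 ≤ r) (n : ℕ) : dfn r h5 (n+2) ≠ dfn r h5 n := by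
  intro h
  have h' := congrArg Fin.val h
  rw [show n+2 = (n+1)+1 from rfl, dfn_succ_val r h5 (n+1), dfn_succ_val r h5 n] at h'
  have h2 : (dfn r h5 n).val < r := (dfn r h5 n).isLt
  set m := (dfn r h5 n).val with hm
  rcases Nat.lt_or_ge (m + 1) r with h3 | h3
  · rw [Nat.mod_eq_of_lt h3] at h'
    rcases Nat.lt_or_ge (m + 2) r with h5' | h5'
    · rw [Nat.mod_eq_of_lt (show m+1+1 < r by omega)] at h'; omega
    · rw [show m+1+1 = m+2 from rfl, show m+2 = r by omega, Nat.mod_self] at h'; omega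
  · rw [show m+1 = r by omega, Nat.mod_self, Nat.mod_eq_of_lt (show 0+1 < r by omega)] at h'
    omega

-- the six edge families
lemma adjUU (r : ℕ) (h5 : 5 ≤ r) (n : ℕ) :
    (genDodec r).Adj (dfn r h5 n, 0) (dfn r h5 (n+1), 0) :=
  ⟨ne1 (dfn_succ_ne r h5 n).symm, Or.inl (Or.inl ⟨rfl, rfl, dfn_succ_val r h5 n⟩)⟩

lemma adjVV (r : ℕ) (h5 : 5 ≤ r) (n : ℕ) :
    (genDodec r).Adj (dfn r h5 n, 1) (dfn r h5 (n+1), 1) :=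
  ⟨ne1 (dfn_succ_ne r h5 n).symm, Or.inl (Or.inr (Or.inl ⟨rfl, rfl, dfn_succ_val r h5 n⟩))⟩

lemma adjUU' (r : ℕ) (h5 : 5 ≤ r) (n : ℕ) :
    (genDodec r).Adj (dfn r h5 n, 0) (dfn r h5 n, 2) :=
  ⟨ne2 (by decide), Or.inl (Or.inr (Or.inr (Or.inl ⟨rfl, rfl, rfl⟩)))⟩

lemma adjVV' (r : ℕ) (h5 : 5 ≤ r) (n : ℕ) :
    (genDodec r).Adj (dfn r h5 n, 1) (dfn r h5 n, 3) :=
  ⟨ne2 (by decide), Or.inl (Or.inr (Or.inr (Or.inr (Or.inl ⟨rfl, rfl, rfl⟩))))⟩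

lemma adjV'U' (r : ℕ) (h5 : 5 ≤ r) (n : ℕ) :
    (genDodec r).Adj (dfn r h5 n, 3) (dfn r h5 n, 2) :=
  ⟨ne2 (by decide), Or.inl (Or.inr (Or.inr (Or.inr (Or.inr (Or.inl ⟨rfl, rfl, rfl⟩)))))⟩

lemma adjU'V' (r : ℕ) (h5 : 5 ≤ r) (n : ℕ) :
    (genDodec r).Adj (dfn r h5 n, 2) (dfn r h5 (n+1), 3) :=
  ⟨ne2 (by decide), Or.inl (Or.inr (Or.inr (Or.inr (Or.inr (Or.inr ⟨rfl, rfl, dfn_succ_val r h5 n⟩)))))⟩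

def thd (x y : ZMod 3) : ZMod 3 := -x - y

lemma thd_eq (x y z : ZMod 3) (hxy : x ≠ y) (hzx : z ≠ x) (hzy : z ≠ y) : z = thd x y := by
  revert hxy hzx hzy; revert x y z; decide

lemma zkey (a0 a1 a2 a3 a4 a5 a6 : ZMod 3)
    (h10 : a0 ≠ a2) (h11 : a1 ≠ a3) (h12 : a2 ≠ a4) (h13 : a3 ≠ a5) (h14 : a4 ≠ a6)
    (hp1 : thd a0 a2 ≠ thd a1 a3) (hp2 : thd a1 a3 ≠ thd a2 a4)
    (hp3 : thd a2 a4 ≠ thd a3 a5) (hp4 : thd a3 a5 ≠ thd a4 a6)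
    (hb1 : thd (thd a0 a2) (thd a1 a3) ≠ thd (thd a2 a4) (thd a3 a5))
    (hb2 : thd (thd a1 a3) (thd a2 a4) ≠ thd (thd a3 a5) (thd a4 a6))
    (hq : a3 ≠ thd (thd (thd a0 a2) (thd a1 a3)) (thd (thd a2 a4) (thd a3 a5))) :
    a1 - a0 = a2 - a1 := by
  revert h10 h11 h12 h13 h14 hp1 hp2 hp3 hp4 hb1 hb2 hq
  revert a0 a1 a2 a3 a4 a5 a6
  decide

lemma cast3_ne {x y : Fin 3} (h : x ≠ y) : ((x.val : ZMod 3)) ≠ ((y.val : ZMod 3)) := by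
  revert h; revert x y; decide

lemma nec (r : ℕ) (h5 : 5 ≤ r) (c : Fin r × Fin 4 → Fin 3)
    (hc : IsInjColoring (genDodec r) c) : 3 ∣ r := by
  set A : ℕ → ZMod 3 := fun n => ((c (dfn r h5 n, 0)).val : ZMod 3) with hA
  set Bf : ℕ → ZMod 3 := fun n => ((c (dfn r h5 n, 1)).val : ZMod 3) with hB
  set P : ℕ → ZMod 3 := fun n => ((c (dfn r h5 n, 2)).val : ZMod 3) with hP
  set Q : ℕ → ZMod 3 := fun n => ((c (dfn r h5 n, 3)).val : ZMod 3) with hQ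
  -- G-facts
  have G1 : ∀ n, A n ≠ A (n+2) := fun n => cast3_ne <| hc _ _ (ne1 (dfn_succ2_ne r h5 n).symm)
    ⟨(dfn r h5 (n+1), 0), adjUU r h5 n, ((genDodec r).adj_symm (adjUU r h5 (n+1)))⟩
  have G2 : ∀ n, A n ≠ P (n+1) := fun n => cast3_ne <| hc _ _ (ne2 (by decide))
    ⟨(dfn r h5 (n+1), 0), adjUU r h5 n, (genDodec r).adj_symm (adjUU' r h5 (n+1))⟩
  have G3 : ∀ n, A (n+2) ≠ P (n+1) := fun n => cast3_ne <| hc _ _ (ne2 (by decide))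
    ⟨(dfn r h5 (n+1), 0), (genDodec r).adj_symm (adjUU r h5 (n+1)), (genDodec r).adj_symm (adjUU' r h5 (n+1))⟩
  have G4 : ∀ n, P n ≠ P (n+1) := fun n => cast3_ne <| hc _ _ (ne1 (dfn_succ_ne r h5 n).symm)
    ⟨(dfn r h5 (n+1), 3), adjU'V' r h5 n, (genDodec r).adj_symm (adjV'U' r h5 (n+1))⟩
  have G5 : ∀ n, Bf (n+1) ≠ P n := fun n => cast3_ne <| hc _ _ (ne2 (by decide))
    ⟨(dfn r h5 (n+1), 3), adjVV' r h5 (n+1), adjU'V' r h5 n⟩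
  have G6 : ∀ n, Bf (n+1) ≠ P (n+1) := fun n => cast3_ne <| hc _ _ (ne2 (by decide))
    ⟨(dfn r h5 (n+1), 3), adjVV' r h5 (n+1), (genDodec r).adj_symm (adjV'U' r h5 (n+1))⟩
  have G7 : ∀ n, Bf n ≠ Bf (n+2) := fun n => cast3_ne <| hc _ _ (ne1 (dfn_succ2_ne r h5 n).symm)
    ⟨(dfn r h5 (n+1), 1), adjVV r h5 n, (genDodec r).adj_symm (adjVV r h5 (n+1))⟩
  have G8 : ∀ n, Bf n ≠ Q (n+1) := fun n => cast3_ne <| hc _ _ (ne2 (by decide))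
    ⟨(dfn r h5 (n+1), 1), adjVV r h5 n, (genDodec r).adj_symm (adjVV' r h5 (n+1))⟩
  have G9 : ∀ n, Bf (n+2) ≠ Q (n+1) := fun n => cast3_ne <| hc _ _ (ne2 (by decide))
    ⟨(dfn r h5 (n+1), 1), (genDodec r).adj_symm (adjVV r h5 (n+1)), (genDodec r).adj_symm (adjVV' r h5 (n+1))⟩
  have G10 : ∀ n, A n ≠ Q n := fun n => cast3_ne <| hc _ _ (ne2 (by decide))
    ⟨(dfn r h5 n, 2), adjUU' r h5 n, adjV'U' r h5 n⟩
  have G11 : ∀ n, A n ≠ Q (n+1) := fun n => cast3_ne <| hc _ _ (ne2 (by decide))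
    ⟨(dfn r h5 n, 2), adjUU' r h5 n, (genDodec r).adj_symm (adjU'V' r h5 n)⟩
  have G12 : ∀ n, Q n ≠ Q (n+1) := fun n => cast3_ne <| hc _ _ (ne1 (dfn_succ_ne r h5 n).symm)
    ⟨(dfn r h5 n, 2), adjV'U' r h5 n, (genDodec r).adj_symm (adjU'V' r h5 n)⟩
  have e1 : ∀ m, P (m+1) = thd (A m) (A (m+2)) :=
    fun m => thd_eq _ _ _ (G1 m) (G2 m).symm (G3 m).symm
  have e2 : ∀ m, Bf (m+1) = thd (P m) (P (m+1)) :=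
    fun m => thd_eq _ _ _ (G4 m) (G5 m) (G6 m)
  have e3 : ∀ m, Q (m+1) = thd (Bf m) (Bf (m+2)) :=
    fun m => thd_eq _ _ _ (G7 m) (G8 m).symm (G9 m).symm
  have step : ∀ n, A (n+1) - A n = A (n+2) - A (n+1) := by
    intro n
    apply zkey (A n) (A (n+1)) (A (n+2)) (A (n+3)) (A (n+4)) (A (n+5)) (A (n+6))
      (G1 n) (G1 (n+1)) (G1 (n+2)) (G1 (n+3)) (G1 (n+4))
    · rw [← e1 n, ← e1 (n+1)]; exact G4 (n+1)
    · rw [← e1 (n+1), ← e1 (n+2)]; exact G4 (n+2)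
    · rw [← e1 (n+2), ← e1 (n+3)]; exact G4 (n+3)
    · rw [← e1 (n+3), ← e1 (n+4)]; exact G4 (n+4)
    · rw [← e1 n, ← e1 (n+1), ← e1 (n+2), ← e1 (n+3), ← e2 (n+1), ← e2 (n+3)]
      exact G7 (n+2)
    · rw [← e1 (n+1), ← e1 (n+2), ← e1 (n+3), ← e1 (n+4), ← e2 (n+2), ← e2 (n+4)]
      exact G7 (n+3)
    · rw [← e1 n, ← e1 (n+1), ← e1 (n+2), ← e1 (n+3), ← e2 (n+1), ← e2 (n+3), ← e3 (n+2)]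
      exact G10 (n+3)
  have const : ∀ n, A (n+1) - A n = A 1 - A 0 := by
    intro n
    induction n with
    | zero => rfl
    | succ k ih => rw [← ih]; exact (step k).symm
  have lin : ∀ n, A n = A 0 + n * (A 1 - A 0) := by
    intro n
    induction n with
    | zero => simp
    | succ k ih =>
      have := const k
      have h' : A (k+1) = A k + (A 1 - A 0) := by
        rw [← this]; ring
      rw [h', ih]; push_cast; ring
  have hwrap : A r = A 0 := by
    have : dfn r h5 r = dfn r h5 0 := by
      apply Fin.ext; show r % r = 0 % r; simp
    simp only [hA, this]
  have hd : (r : ZMod 3) * (A 1 - A 0) = 0 := by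
    have := lin r
    rw [hwrap] at this
    linear_combination -this
  have hdne : A 1 - A 0 ≠ 0 := by
    intro h0
    apply G1 0
    have := lin 2
    rw [h0] at this
    simpa using this.symm
  have hr0 : (r : ZMod 3) = 0 := by
    rcases mul_eq_zero.mp hd with h | h
    · exact h
    · exact absurd h hdne
  exact (ZMod.natCast_eq_zero_iff r 3).mp hr0

lemma mspec (r : ℕ) (h5 : 5 ≤ r) (a : ℕ) (ha : a < r) :
    ((a+1) % r = a+1 ∧ a+1 < r) ∨ ((a+1) % r = 0 ∧ a+1 = r) := by
  rcases Nat.lt_or_ge (a+1) r with h | h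
  · exact Or.inl ⟨Nat.mod_eq_of_lt h, h⟩
  · have h' : a + 1 = r := by omega
    exact Or.inr ⟨by rw [h', Nat.mod_self], h'⟩

set_option maxHeartbeats 4000000 in
lemma suff3 (r : ℕ) (h5 : 5 ≤ r) (hdvd : 3 ∣ r) :
    ∃ c : Fin r × Fin 4 → Fin 3, IsInjColoring (genDodec r) c := by
  refine ⟨fun x => ⟨(x.1.val + x.2.val % 2) % 3, Nat.mod_lt _ (by omega)⟩, ?_⟩
  rintro u v huv ⟨w, ⟨-, hu⟩, ⟨-, hv⟩⟩ hEq
  have hEq' : (u.1.val + u.2.val % 2) % 3 = (v.1.val + v.2.val % 2) % 3 :=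
    congrArg Fin.val hEq
  have huv' : u.1.val ≠ v.1.val ∨ u.2.val ≠ v.2.val := by
    by_contra hcon; push_neg at hcon
    exact huv (Prod.ext (Fin.ext hcon.1) (Fin.ext hcon.2))
  have hu1 : u.1.val < r := u.1.isLt
  have hv1 : v.1.val < r := v.1.isLt
  have hw1 : w.1.val < r := w.1.isLt
  unfold dodecRel at hu hv
  simp only [Fin.ext_iff] at hu hv
  rcases hu with (⟨a1,a2,a3⟩|⟨a1,a2,a3⟩|⟨a1,a2,a3⟩|⟨a1,a2,a3⟩|⟨a1,a2,a3⟩|⟨a1,a2,a3⟩)|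
      (⟨a1,a2,a3⟩|⟨a1,a2,a3⟩|⟨a1,a2,a3⟩|⟨a1,a2,a3⟩|⟨a1,a2,a3⟩|⟨a1,a2,a3⟩) <;>
    rcases hv with (⟨b1,b2,b3⟩|⟨b1,b2,b3⟩|⟨b1,b2,b3⟩|⟨b1,b2,b3⟩|⟨b1,b2,b3⟩|⟨b1,b2,b3⟩)|
      (⟨b1,b2,b3⟩|⟨b1,b2,b3⟩|⟨b1,b2,b3⟩|⟨b1,b2,b3⟩|⟨b1,b2,b3⟩|⟨b1,b2,b3⟩) <;>
    first
      | omega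
      | (rcases mspec r h5 u.1.val hu1 with ⟨m1, m1'⟩ | ⟨m1, m1'⟩ <;>
          rcases mspec r h5 v.1.val hv1 with ⟨m2, m2'⟩ | ⟨m2, m2'⟩ <;>
          rcases mspec r h5 w.1.val hw1 with ⟨m3, m3'⟩ | ⟨m3, m3'⟩ <;>
          omega)

def g4 (r i t : ℕ) : ℕ :=
  if r % 3 = 1 then
    if i = r-1 then (if t % 2 = 0 then 3 else 0)
    else if i = r-2 then (if t % 2 = 0 then 2 else 3)
    else (i + t % 2) % 3
  else
    if i = r-1 then (if t = 0 then 3 else if t = 1 then 3 else if t = 2 then 2 else 0)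
    else if i = r-2 then (if t = 0 then 3 else if t = 1 then 3 else if t = 2 then 0 else 1)
    else (i + t % 2) % 3

lemma g4_lt (r i t : ℕ) : g4 r i t < 4 := by
  unfold g4; split_ifs <;> omega

set_option maxHeartbeats 16000000 in
lemma suff4 (r : ℕ) (h5 : 5 ≤ r) (hdvd : ¬ 3 ∣ r) :
    ∃ c : Fin r × Fin 4 → Fin 4, IsInjColoring (genDodec r) c := by
  have hmod : r % 3 = 1 ∨ r % 3 = 2 := by omega
  refine ⟨fun x => ⟨g4 r x.1.val x.2.val, g4_lt r _ _⟩, ?_⟩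
  rintro u v huv ⟨w, ⟨-, hu⟩, ⟨-, hv⟩⟩ hEq
  have hEq' : g4 r u.1.val u.2.val = g4 r v.1.val v.2.val := congrArg Fin.val hEq
  have huv' : u.1.val ≠ v.1.val ∨ u.2.val ≠ v.2.val := by
    by_contra hcon; push_neg at hcon
    exact huv (Prod.ext (Fin.ext hcon.1) (Fin.ext hcon.2))
  have hu1 : u.1.val < r := u.1.isLt
  have hv1 : v.1.val < r := v.1.isLt
  have hw1 : w.1.val < r := w.1.isLt
  unfold dodecRel at hu hv
  simp only [Fin.ext_iff] at hu hv
  unfold g4 at hEq'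
  rcases hmod with hm | hm <;> simp only [hm] at hEq' <;> norm_num at hEq' <;>
  rcases hu with (⟨a1,a2,a3⟩|⟨a1,a2,a3⟩|⟨a1,a2,a3⟩|⟨a1,a2,a3⟩|⟨a1,a2,a3⟩|⟨a1,a2,a3⟩)|
      (⟨a1,a2,a3⟩|⟨a1,a2,a3⟩|⟨a1,a2,a3⟩|⟨a1,a2,a3⟩|⟨a1,a2,a3⟩|⟨a1,a2,a3⟩) <;>
    rcases hv with (⟨b1,b2,b3⟩|⟨b1,b2,b3⟩|⟨b1,b2,b3⟩|⟨b1,b2,b3⟩|⟨b1,b2,b3⟩|⟨b1,b2,b3⟩)|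
      (⟨b1,b2,b3⟩|⟨b1,b2,b3⟩|⟨b1,b2,b3⟩|⟨b1,b2,b3⟩|⟨b1,b2,b3⟩|⟨b1,b2,b3⟩) <;>

    (simp only [a1, a2, b1, b2] at hEq' <;> norm_num at hEq' <;>
     all_goals (split_ifs at hEq' <;>
     first
      | omega
      | (rcases mspec r h5 u.1.val hu1 with ⟨m1, m1'⟩ | ⟨m1, m1'⟩ <;>
          rcases mspec r h5 v.1.val hv1 with ⟨m2, m2'⟩ | ⟨m2, m2'⟩ <;>
          rcases mspec r h5 w.1.val hw1 with ⟨m3, m3'⟩ | ⟨m3, m3'⟩ <;>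
          omega)))


set_option maxHeartbeats 1600000 in
/-- For `r ≥ 5`, the generalised dodecahedron `D_r` admits an injective
3-colouring iff `3 ∣ r`; hence `χ_i(D_r) = 4` iff `r` is not divisible by 3. -/
theorem genDodec_injChrom (r : ℕ) (hr : 5 ≤ r) :
    ((∃ c : Fin r × Fin 4 → Fin 3, IsInjColoring (genDodec r) c) ↔ 3 ∣ r) ∧
    (injChrom (genDodec r) = 4 ↔ ¬ 3 ∣ r) := by
  constructor
  · exact ⟨fun ⟨c, hc⟩ => nec r hr c hc, fun h => suff3 r hr h⟩
  · by_cases hdvd : 3 ∣ r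
    · apply iff_of_false _ (by simpa using hdvd)
      intro h4
      have h3 : 3 ∈ {n : ℕ | ∃ c : Fin r × Fin 4 → Fin n, IsInjColoring (genDodec r) c} :=
        suff3 r hr hdvd
      have hle : injChrom (genDodec r) ≤ (3 : ℕ∞) := by
        have := iInf₂_le (f := fun (n : ℕ)
          (_ : n ∈ {n : ℕ | ∃ c : Fin r × Fin 4 → Fin n, IsInjColoring (genDodec r) c}) =>
          (n : ℕ∞)) 3 h3
        simpa [injChrom] using this
      rw [h4] at hle
      norm_num at hle
    · apply iff_of_true _ hdvd
      have h4 : 4 ∈ {n : ℕ | ∃ c : Fin r × Fin 4 → Fin n, IsInjColoring (genDodec r) c} :=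
        suff4 r hr hdvd
      apply le_antisymm
      · have := iInf₂_le (f := fun (n : ℕ)
          (_ : n ∈ {n : ℕ | ∃ c : Fin r × Fin 4 → Fin n, IsInjColoring (genDodec r) c}) =>
          (n : ℕ∞)) 4 h4
        simpa [injChrom] using this
      · apply le_iInf₂
        intro n hn
        obtain ⟨c, hc⟩ := hn
        by_contra hlt
        push_neg at hlt
        have hn3 : n ≤ 3 := by
          have := hlt
          norm_num at this
          exact_mod_cast Order.le_of_lt_add_one (by exact_mod_cast this)
        have hex : ∃ c : Fin r × Fin 4 → Fin 3, IsInjColoring (genDodec r) c :=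
          ⟨Fin.castLE hn3 ∘ c, fun u v huv hw h => hc u v huv hw (by
            have := congrArg Fin.val h
            exact Fin.ext this)⟩
        obtain ⟨c3, hc3⟩ := hex
        exact hdvd (nec r hr c3 hc3)
end

section
/- For every odd n ≥ 3, the graph G_n with vertex set V_n = {v^0_0, v^0_1} ∪ {v^i_0, v^i_1, v^i_2, v^i_3 : 1 ≤ i ≤ n} and edge set E^0_n ∪ E^1_n (as defined in the context) admits no injective 4-colouring. -/
/-- Vertex type of the graph `G_n`: `Sum.inl 0 = v⁰₀`, `Sum.inl 1 = v⁰₁`, and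
`Sum.inr (i, j) = vⁱ⁺¹ⱼ` for `0 ≤ i ≤ n − 1`, `0 ≤ j ≤ 3`. -/
def FamV (n : ℕ) : Type := Sum (Fin 2) (Fin n × Fin 4)

/-- The vertex `vⁱⱼ` of `G_n`, with the identifications `v⁰₂ = v⁰₃ = v⁰₁`. -/
def famVtx (n : ℕ) (i : Fin (n + 1)) (j : Fin 4) : FamV n :=
  if h : i.val = 0 then (if j.val = 0 then Sum.inl 0 else Sum.inl 1)
  else Sum.inr (⟨i.val - 1, by have := i.isLt; omega⟩, j)

/-- One orientation of the edges `E⁰_n ∪ E¹_n` of `G_n` (indices mod `n+1`). -/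
def famRel (n : ℕ) (x y : FamV n) : Prop :=
  (x = famVtx n 0 0 ∧ y = famVtx n 0 1) ∨
  (∃ i : Fin (n + 1), i ≠ 0 ∧
    ((x = famVtx n i 1 ∧ (y = famVtx n i 0 ∨ y = famVtx n i 2 ∨ y = famVtx n i 3)) ∨
     (x = famVtx n i 2 ∧ y = famVtx n i 3))) ∨
  (∃ i : Fin (n + 1), x = famVtx n i 0 ∧ y = famVtx n (i + 1) 2) ∨
  (∃ i : Fin (n + 1), x = famVtx n i 3 ∧ y = famVtx n (i + 1) 0)

/-- The graph `G_n` with vertex set `V_n` and edge set `E⁰_n ∪ E¹_n`. -/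
def famG (n : ℕ) : SimpleGraph (FamV n) where
  Adj x y := x ≠ y ∧ (famRel n x y ∨ famRel n y x)
  symm := by
    constructor
    rintro x y ⟨h1, h2⟩
    exact ⟨h1.symm, h2.symm⟩
  loopless := ⟨fun x h => h.1 rfl⟩

namespace FamAux

abbrev St := Fin 4 × Fin 4 × Fin 4 × Fin 4 × Fin 4

def neqb (a b : Fin 4) : Bool := a.val != b.val

def eqb (s t : St) : Bool :=
  s.1.val == t.1.val && s.2.1.val == t.2.1.val && s.2.2.1.val == t.2.2.1.val
    && s.2.2.2.1.val == t.2.2.2.1.val && s.2.2.2.2.val == t.2.2.2.2.val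

def memb (s : St) (L : List St) : Bool := L.any fun t => eqb s t

def F4 : List (Fin 4) := [0, 1, 2, 3]

def stepCheck (L : List St) : Bool :=
  L.all fun s => F4.all fun u0 => F4.all fun u1 => F4.all fun u2 => F4.all fun u3 =>
    !(neqb u1 u2 && neqb u1 u3 && neqb u2 u3 && neqb u0 u2 && neqb u0 u3 &&
      neqb u1 s.1 && neqb u3 s.1 && neqb u0 s.2.1 && neqb u0 s.2.2.1 &&
      neqb u2 s.2.1 && neqb u2 s.2.2.2.1 && neqb u1 s.2.2.2.2) ||
    memb (u0, u1, u2, s.2.2.2.2, u3) L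

def initCheck (a0 a1 t01 t21 : Fin 4) (L : List St) : Bool :=
  F4.all fun t1 => F4.all fun t3 =>
    !(neqb t1 t21 && neqb t1 t3 && neqb t21 t3 && neqb t01 t21 && neqb t01 t3 &&
      neqb t1 a1 && neqb t1 a0 && neqb t3 a0 && neqb t01 a0 && neqb t21 a1) ||
    memb (t01, t1, t21, a1, t3) L

def closeCheck (a0 a1 t01 t21 : Fin 4) (L : List St) : Bool :=
  L.all fun s =>
    !(neqb s.1 a0 && neqb s.1 t01 && neqb s.2.2.2.2 a1 && neqb s.2.2.2.2 t21 &&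
      neqb a0 s.2.1 && neqb a0 s.2.2.1 && neqb s.2.1 a1 && neqb s.2.2.2.1 a1)

def fullCheck (a0 a1 t01 t21 : Fin 4) (L : List St) : Bool :=
  initCheck a0 a1 t01 t21 L && stepCheck L && closeCheck a0 a1 t01 t21 L

def L0123 : List St := [(0,0,3,1,1), (2,2,3,1,1)]
def L0012 : List St := [(0,0,2,3,3), (0,0,3,3,2), (1,1,2,0,3), (1,1,2,2,3), (1,1,2,3,3)]
def L0120 : List St := [(0,1,2,0,3), (0,1,2,2,3), (0,1,2,3,3), (0,1,3,0,2), (0,1,3,2,2), (0,1,3,3,2), (0,2,1,0,3), (0,2,1,1,3), (0,2,1,3,3), (0,2,3,0,1), (0,2,3,1,1), (0,2,3,3,1), (0,3,1,0,2), (0,3,1,1,2), (0,3,1,2,2), (0,3,2,0,1), (0,3,2,1,1), (0,3,2,2,1), (1,0,2,1,3), (1,0,2,2,3), (1,0,2,3,3), (1,0,3,1,2), (1,0,3,2,2), (1,0,3,3,2), (1,1,0,3,3), (1,1,3,3,0), (1,2,0,0,3), (1,2,0,1,3), (1,2,0,3,3), (1,2,3,0,0), (1,2,3,1,0), (1,2,3,3,0),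 (1,3,0,0,2), (1,3,0,1,2), (1,3,0,2,2), (1,3,2,0,0), (1,3,2,1,0), (1,3,2,2,0), (2,0,1,1,3), (2,0,1,2,3), (2,0,1,3,3), (2,0,3,1,1), (2,0,3,2,1), (2,0,3,3,1), (2,1,0,0,3), (2,1,0,2,3), (2,1,0,3,3), (2,1,3,0,0), (2,1,3,2,0), (2,1,3,3,0), (2,2,0,0,3), (2,2,0,1,1), (2,2,0,1,3), (2,2,0,3,3), (2,3,0,0,1), (2,3,0,1,1), (2,3,0,2,1), (2,3,1,0,0), (2,3,1,1,0), (2,3,1,2,0), (3,0,1,1,2), (3,0,1,2,2), (3,0,1,3,2), (3,0,2,1,1), (3,0,2,2,1), (3,0,2,3,1), (3,1,0,0,2), (3,1,0,2,2), (3,1,0,3,2), (3,1,2,0,0), (3,1,2,2,0), (3,1,2,3,0), (3,2,0,0,1), (3,2,0,1,1), (3,2,0,3,1), (3,2,1,0,0), (3,2,1,1,0), (3,2,1,3,0), (3,3,0,1,1)]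

def L0110 : List St := [(0,1,2,0,3), (0,1,2,2,3), (0,1,2,3,3), (0,1,3,0,2), (0,1,3,2,2), (0,1,3,3,2), (0,2,1,0,3), (0,2,1,1,3), (0,2,1,3,3), (0,2,3,0,1), (0,2,3,1,1), (0,2,3,3,1), (0,3,1,0,2), (0,3,1,1,2), (0,3,1,2,2), (0,3,2,0,1), (0,3,2,1,1), (0,3,2,2,1), (1,0,2,1,3), (1,0,2,2,3), (1,0,2,3,3), (1,0,3,1,2), (1,0,3,2,2), (1,0,3,3,2), (1,2,0,0,3), (1,2,0,1,3), (1,2,0,3,3), (1,2,3,0,0), (1,2,3,1,0), (1,2,3,3,0), (1,3,0,0,2), (1,3,0,1,2), (1,3,0,2,2), (1,3,2,0,0), (1,3,2,1,0), (1,3,2,2,0), (2,0,1,1,3), (2,0,1,2,3), (2,0,1,3,3), (2,0,3,1,1), (2,0,3,2,1), (2,0,3,3,1), (2,1,0,0,3), (2,1,0,2,3), (2,1,0,3,3), (2,1,3,0,0), (2,1,3,2,0), (2,1,3,3,0), (2,3,0,0,1), (2,3,0,1,1), (2,3,0,2,1), (2,3,1,0,0), (2,3,1,1,0), (2,3,1,2,0),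 (3,0,1,1,2), (3,0,1,2,2), (3,0,1,3,2), (3,0,2,1,1), (3,0,2,2,1), (3,0,2,3,1), (3,1,0,0,2), (3,1,0,2,2), (3,1,0,3,2), (3,1,2,0,0), (3,1,2,2,0), (3,1,2,3,0), (3,2,0,0,1), (3,2,0,1,1), (3,2,0,3,1), (3,2,1,0,0), (3,2,1,1,0), (3,2,1,3,0)]


def L0112 : List St := []

theorem check0123 : fullCheck 0 1 2 3 L0123 = true := by decide
theorem check0012 : fullCheck 0 0 1 2 L0012 = true := by decide
theorem check0120 : fullCheck 0 1 2 0 L0120 = true := by decide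
theorem check0112 : fullCheck 0 1 1 2 L0112 = true := by decide
theorem check0110 : fullCheck 0 1 1 0 L0110 = true := by decide

theorem mem_F4 (u : Fin 4) : u ∈ F4 := by fin_cases u <;> decide

theorem neqb_iff {a b : Fin 4} : neqb a b = true ↔ a ≠ b := by
  simp [neqb, Fin.ext_iff]

theorem eqb_iff {s t : St} : eqb s t = true ↔ s = t := by
  obtain ⟨a, b, c, d, e⟩ := s; obtain ⟨a', b', c', d', e'⟩ := t
  simp [eqb, Fin.ext_iff, and_assoc]

theorem memb_iff {s : St} {L : List St} : memb s L = true ↔ s ∈ L := by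
  simp [memb, List.any_eq_true, eqb_iff]

theorem step_prop {L : List St} (h : stepCheck L = true) :
    ∀ s ∈ L, ∀ u0 u1 u2 u3 : Fin 4,
      u1 ≠ u2 → u1 ≠ u3 → u2 ≠ u3 → u0 ≠ u2 → u0 ≠ u3 →
      u1 ≠ s.1 → u3 ≠ s.1 → u0 ≠ s.2.1 → u0 ≠ s.2.2.1 →
      u2 ≠ s.2.1 → u2 ≠ s.2.2.2.1 → u1 ≠ s.2.2.2.2 →
      (u0, u1, u2, s.2.2.2.2, u3) ∈ L := by
  intro s hs u0 u1 u2 u3 h1 h2 h3 h4 h5 h6 h7 h8 h9 h10 h11 h12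
  rw [stepCheck, List.all_eq_true] at h
  have h' := h s hs
  rw [List.all_eq_true] at h'
  have h'' := h' u0 (mem_F4 u0)
  rw [List.all_eq_true] at h''
  have h3' := h'' u1 (mem_F4 u1)
  rw [List.all_eq_true] at h3'
  have h4' := h3' u2 (mem_F4 u2)
  rw [List.all_eq_true] at h4'
  have h5' := h4' u3 (mem_F4 u3)
  rw [Bool.or_eq_true, memb_iff] at h5'
  rcases h5' with hbad | hmem
  · exfalso
    rw [Bool.not_eq_true'] at hbad
    have hgood : (neqb u1 u2 && neqb u1 u3 && neqb u2 u3 && neqb u0 u2 && neqb u0 u3 &&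
      neqb u1 s.1 && neqb u3 s.1 && neqb u0 s.2.1 && neqb u0 s.2.2.1 &&
      neqb u2 s.2.1 && neqb u2 s.2.2.2.1 && neqb u1 s.2.2.2.2) = true := by
      simp only [Bool.and_eq_true, neqb_iff, and_assoc]
      exact ⟨h1, h2, h3, h4, h5, h6, h7, h8, h9, h10, h11, h12⟩
    rw [hgood] at hbad
    exact Bool.noConfusion hbad
  · exact hmem

theorem init_prop {a0 a1 t01 t21 : Fin 4} {L : List St}
    (h : initCheck a0 a1 t01 t21 L = true) :
    ∀ t1 t3 : Fin 4,
      t1 ≠ t21 → t1 ≠ t3 → t21 ≠ t3 → t01 ≠ t21 → t01 ≠ t3 →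
      t1 ≠ a1 → t1 ≠ a0 → t3 ≠ a0 → t01 ≠ a0 → t21 ≠ a1 →
      (t01, t1, t21, a1, t3) ∈ L := by
  intro t1 t3 h1 h2 h3 h4 h5 h6 h7 h8 h9 h10
  rw [initCheck, List.all_eq_true] at h
  have h' := h t1 (mem_F4 t1)
  rw [List.all_eq_true] at h'
  have h'' := h' t3 (mem_F4 t3)
  rw [Bool.or_eq_true, memb_iff] at h''
  rcases h'' with hbad | hmem
  · exfalso
    rw [Bool.not_eq_true'] at hbad
    have hgood : (neqb t1 t21 && neqb t1 t3 && neqb t21 t3 && neqb t01 t21 && neqb t01 t3 &&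
      neqb t1 a1 && neqb t1 a0 && neqb t3 a0 && neqb t01 a0 && neqb t21 a1) = true := by
      simp only [Bool.and_eq_true, neqb_iff, and_assoc]
      exact ⟨h1, h2, h3, h4, h5, h6, h7, h8, h9, h10⟩
    rw [hgood] at hbad
    exact Bool.noConfusion hbad
  · exact hmem

theorem close_prop {a0 a1 t01 t21 : Fin 4} {L : List St}
    (h : closeCheck a0 a1 t01 t21 L = true) :
    ∀ s ∈ L, s.1 ≠ a0 → s.1 ≠ t01 → s.2.2.2.2 ≠ a1 → s.2.2.2.2 ≠ t21 →
      a0 ≠ s.2.1 → a0 ≠ s.2.2.1 → s.2.1 ≠ a1 → s.2.2.2.1 ≠ a1 → False := by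
  intro s hs h1 h2 h3 h4 h5 h6 h7 h8
  rw [closeCheck, List.all_eq_true] at h
  have h' := h s hs
  rw [Bool.not_eq_true'] at h'
  have hgood : (neqb s.1 a0 && neqb s.1 t01 && neqb s.2.2.2.2 a1 && neqb s.2.2.2.2 t21 &&
      neqb a0 s.2.1 && neqb a0 s.2.2.1 && neqb s.2.1 a1 && neqb s.2.2.2.1 a1) = true := by
    simp only [Bool.and_eq_true, neqb_iff, and_assoc]
    exact ⟨h1, h2, h3, h4, h5, h6, h7, h8⟩
  rw [hgood] at h'
  exact Bool.noConfusion h'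

def mkPerm (s0 s1 s2 s3 : Fin 4) (x : Fin 4) : Fin 4 :=
  if x = 0 then s0 else if x = 1 then s1 else if x = 2 then s2 else s3

theorem mkPerm_inj {s0 s1 s2 s3 : Fin 4} (h01 : s0 ≠ s1) (h02 : s0 ≠ s2) (h03 : s0 ≠ s3)
    (h12 : s1 ≠ s2) (h13 : s1 ≠ s3) (h23 : s2 ≠ s3) :
    Function.Injective (mkPerm s0 s1 s2 s3) := by
  intro a b hab
  fin_cases a <;> fin_cases b <;> simp_all [mkPerm]

theorem norm_exists : ∀ p q r t : Fin 4, p ≠ r → q ≠ t → r ≠ t →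
    ∃ s0 s1 s2 s3 : Fin 4, s0 ≠ s1 ∧ s0 ≠ s2 ∧ s0 ≠ s3 ∧ s1 ≠ s2 ∧ s1 ≠ s3 ∧ s2 ≠ s3 ∧
      ((mkPerm s0 s1 s2 s3 p, mkPerm s0 s1 s2 s3 q, mkPerm s0 s1 s2 s3 r, mkPerm s0 s1 s2 s3 t)
          = ((0 : Fin 4), (1 : Fin 4), (2 : Fin 4), (3 : Fin 4)) ∨
       (mkPerm s0 s1 s2 s3 p, mkPerm s0 s1 s2 s3 q, mkPerm s0 s1 s2 s3 r, mkPerm s0 s1 s2 s3 t)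
          = (0, 0, 1, 2) ∨
       (mkPerm s0 s1 s2 s3 p, mkPerm s0 s1 s2 s3 q, mkPerm s0 s1 s2 s3 r, mkPerm s0 s1 s2 s3 t)
          = (0, 1, 2, 0) ∨
       (mkPerm s0 s1 s2 s3 p, mkPerm s0 s1 s2 s3 q, mkPerm s0 s1 s2 s3 r, mkPerm s0 s1 s2 s3 t)
          = (0, 1, 1, 2) ∨
       (mkPerm s0 s1 s2 s3 p, mkPerm s0 s1 s2 s3 q, mkPerm s0 s1 s2 s3 r, mkPerm s0 s1 s2 s3 t)
          = (0, 1, 1, 0)) := by decide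

end FamAux

namespace FamAux

theorem vtx_ne_fst {n : ℕ} {i i' : Fin (n+1)} (h : i.val ≠ i'.val) (j j' : Fin 4) :
    famVtx n i j ≠ famVtx n i' j' := by
  unfold famVtx FamV
  by_cases h1 : i.val = 0 <;> by_cases h2 : i'.val = 0
  · omega
  · rw [dif_pos h1, dif_neg h2]
    split <;> exact fun he => Sum.inl_ne_inr he
  · rw [dif_neg h1, dif_pos h2]
    split <;> exact fun he => Sum.inr_ne_inl he
  · rw [dif_neg h1, dif_neg h2]
    intro he
    injection he with he'
    have hv : i.val - 1 = i'.val - 1 := congrArg (fun p => p.1.val) he'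
    omega

theorem vtx_ne_snd {n : ℕ} {i : Fin (n+1)} (hi : i.val ≠ 0) {j j' : Fin 4} (h : j ≠ j') :
    famVtx n i j ≠ famVtx n i j' := by
  unfold famVtx FamV
  rw [dif_neg hi, dif_neg hi]
  intro he
  injection he with he'
  exact h (congrArg Prod.snd he')

theorem v01_ne {n : ℕ} : famVtx n 0 0 ≠ famVtx n 0 1 := by
  unfold famVtx FamV
  rw [dif_pos (Fin.val_zero (n+1)), dif_pos (Fin.val_zero (n+1)),
    if_pos (by decide : (0 : Fin 4).val = 0), if_neg (by decide : ¬ (1 : Fin 4).val = 0)]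
  intro he
  exact absurd (Sum.inl.inj he) (by decide)

theorem v02_eq {n : ℕ} : famVtx n 0 2 = famVtx n 0 1 := by
  unfold famVtx FamV
  rw [dif_pos (Fin.val_zero (n+1)), dif_pos (Fin.val_zero (n+1)),
    if_neg (by decide : ¬ (2 : Fin 4).val = 0), if_neg (by decide : ¬ (1 : Fin 4).val = 0)]

theorem v03_eq {n : ℕ} : famVtx n 0 3 = famVtx n 0 1 := by
  unfold famVtx FamV
  rw [dif_pos (Fin.val_zero (n+1)), dif_pos (Fin.val_zero (n+1)),
    if_neg (by decide : ¬ (3 : Fin 4).val = 0), if_neg (by decide : ¬ (1 : Fin 4).val = 0)]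

theorem adj10 {n : ℕ} {i : Fin (n+1)} (hi : i ≠ 0) (hne : famVtx n i 1 ≠ famVtx n i 0) :
    (famG n).Adj (famVtx n i 1) (famVtx n i 0) :=
  ⟨hne, Or.inl (Or.inr (Or.inl ⟨i, hi, Or.inl ⟨rfl, Or.inl rfl⟩⟩))⟩

theorem adj12 {n : ℕ} {i : Fin (n+1)} (hi : i ≠ 0) (hne : famVtx n i 1 ≠ famVtx n i 2) :
    (famG n).Adj (famVtx n i 1) (famVtx n i 2) :=
  ⟨hne, Or.inl (Or.inr (Or.inl ⟨i, hi, Or.inl ⟨rfl, Or.inr (Or.inl rfl)⟩⟩))⟩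

theorem adj13 {n : ℕ} {i : Fin (n+1)} (hi : i ≠ 0) (hne : famVtx n i 1 ≠ famVtx n i 3) :
    (famG n).Adj (famVtx n i 1) (famVtx n i 3) :=
  ⟨hne, Or.inl (Or.inr (Or.inl ⟨i, hi, Or.inl ⟨rfl, Or.inr (Or.inr rfl)⟩⟩))⟩

theorem adj23 {n : ℕ} {i : Fin (n+1)} (hi : i ≠ 0) (hne : famVtx n i 2 ≠ famVtx n i 3) :
    (famG n).Adj (famVtx n i 2) (famVtx n i 3) :=
  ⟨hne, Or.inl (Or.inr (Or.inl ⟨i, hi, Or.inr ⟨rfl, rfl⟩⟩))⟩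

theorem adjA {n : ℕ} {i i' : Fin (n+1)} (h : i' = i + 1)
    (hne : famVtx n i 0 ≠ famVtx n i' 2) :
    (famG n).Adj (famVtx n i 0) (famVtx n i' 2) :=
  ⟨hne, Or.inl (Or.inr (Or.inr (Or.inl ⟨i, rfl, by rw [h]⟩)))⟩

theorem adjB {n : ℕ} {i i' : Fin (n+1)} (h : i' = i + 1)
    (hne : famVtx n i 3 ≠ famVtx n i' 0) :
    (famG n).Adj (famVtx n i 3) (famVtx n i' 0) :=
  ⟨hne, Or.inl (Or.inr (Or.inr (Or.inr ⟨i, rfl, by rw [h]⟩)))⟩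

theorem adj01 {n : ℕ} : (famG n).Adj (famVtx n 0 0) (famVtx n 0 1) :=
  ⟨v01_ne, Or.inl (Or.inl ⟨rfl, rfl⟩)⟩

section Small

variable {n : ℕ} (hn : 3 ≤ n)

theorem val_one {n : ℕ} (hn : 3 ≤ n) : (1 : Fin (n+1)).val = 1 := by
  rw [Fin.val_one']; exact Nat.mod_eq_of_lt (by omega)

theorem one_ne_zero' (hn : 3 ≤ n) : (1 : Fin (n+1)) ≠ 0 := by
  intro h
  have := congrArg Fin.val h
  rw [val_one hn, Fin.val_zero] at this
  omega

theorem adjAA0 (hn : 3 ≤ n) : (famG n).Adj (famVtx n 0 0) (famVtx n 1 2) := by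
  have h := adjA (n := n) (i := 0) (i' := 1) (zero_add 1).symm
    (vtx_ne_fst (by rw [Fin.val_zero, val_one hn]; omega) 0 2)
  exact h

theorem adjAB0 (hn : 3 ≤ n) : (famG n).Adj (famVtx n 0 1) (famVtx n 1 0) := by
  have h := adjB (n := n) (i := 0) (i' := 1) (zero_add 1).symm
    (vtx_ne_fst (by rw [Fin.val_zero, val_one hn]; omega) 3 0)
  rwa [v03_eq] at h

end Small

open Fin.NatCast in
theorem master {n : ℕ} (hn : 3 ≤ n) (c : FamV n → Fin 4) (hc : IsInjColoring (famG n) c)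
    (a0 a1 t01 t21 : Fin 4) (L : List St)
    (ha0 : c (famVtx n 0 0) = a0) (ha1 : c (famVtx n 0 1) = a1)
    (hb0 : c (famVtx n 1 0) = t01) (hb2 : c (famVtx n 1 2) = t21)
    (hchk : fullCheck a0 a1 t01 t21 L = true) : False := by
  obtain ⟨hinit, hstep, hclose⟩ :
      initCheck a0 a1 t01 t21 L = true ∧ stepCheck L = true ∧
        closeCheck a0 a1 t01 t21 L = true := by
    simpa [fullCheck, Bool.and_eq_true, and_assoc] using hchk
  have key : ∀ x y w : FamV n, x ≠ y → (famG n).Adj x w → (famG n).Adj y w → c x ≠ c y :=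
    fun x y w hxy h1 h2 => hc x y hxy ⟨w, h1, h2⟩
  have hcast : ∀ k : ℕ, k ≤ n → ((k : Fin (n+1))).val = k :=
    fun k hk => Fin.val_cast_of_lt (by omega)
  have hsucc : ∀ k : ℕ, ((k+1 : ℕ) : Fin (n+1)) = (k : Fin (n+1)) + 1 := by
    intro k; push_cast; ring
  have hzero : ((0:ℕ) : Fin (n+1)) = 0 := Nat.cast_zero
  have hone : ((1:ℕ) : Fin (n+1)) = 1 := Nat.cast_one
  have hwrap : ((n : Fin (n+1))) + 1 = (0 : Fin (n+1)) := by
    rw [← hsucc]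
    exact_mod_cast Fin.natCast_self (n+1)
  have hne0 : ∀ k : ℕ, 1 ≤ k → k ≤ n → ((k : Fin (n+1))) ≠ 0 := by
    intro k h1 h2 he
    have hv := hcast k h2
    rw [he, Fin.val_zero] at hv
    omega
  have hvne0 : ∀ k : ℕ, 1 ≤ k → k ≤ n → ((k : Fin (n+1))).val ≠ 0 := by
    intro k h1 h2
    rw [hcast k h2]; omega
  have vne : ∀ (k k' : ℕ), k ≤ n → k' ≤ n → k ≠ k' → ∀ j j' : Fin 4,
      famVtx n (k : Fin (n+1)) j ≠ famVtx n (k' : Fin (n+1)) j' := by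
    intro k k' hk hk' hkk j j'
    exact vtx_ne_fst (by rw [hcast k hk, hcast k' hk']; exact hkk) j j'
  have vne0 : ∀ (k : ℕ), 1 ≤ k → k ≤ n → ∀ j j' : Fin 4,
      famVtx n (k : Fin (n+1)) j ≠ famVtx n 0 j' := by
    intro k h1 h2 j j'
    exact vtx_ne_fst (by rw [hcast k h2, Fin.val_zero]; omega) j j'
  -- triangle adjacencies
  have A10 : ∀ k, 1 ≤ k → k ≤ n →
      (famG n).Adj (famVtx n (k : Fin (n+1)) 1) (famVtx n (k : Fin (n+1)) 0) :=
    fun k h1 h2 => adj10 (hne0 k h1 h2) (vtx_ne_snd (hvne0 k h1 h2) (by decide))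
  have A12 : ∀ k, 1 ≤ k → k ≤ n →
      (famG n).Adj (famVtx n (k : Fin (n+1)) 1) (famVtx n (k : Fin (n+1)) 2) :=
    fun k h1 h2 => adj12 (hne0 k h1 h2) (vtx_ne_snd (hvne0 k h1 h2) (by decide))
  have A13 : ∀ k, 1 ≤ k → k ≤ n →
      (famG n).Adj (famVtx n (k : Fin (n+1)) 1) (famVtx n (k : Fin (n+1)) 3) :=
    fun k h1 h2 => adj13 (hne0 k h1 h2) (vtx_ne_snd (hvne0 k h1 h2) (by decide))
  have A23 : ∀ k, 1 ≤ k → k ≤ n →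
      (famG n).Adj (famVtx n (k : Fin (n+1)) 2) (famVtx n (k : Fin (n+1)) 3) :=
    fun k h1 h2 => adj23 (hne0 k h1 h2) (vtx_ne_snd (hvne0 k h1 h2) (by decide))
  -- cross adjacencies within the chain
  have AA : ∀ k, k + 1 ≤ n →
      (famG n).Adj (famVtx n (k : Fin (n+1)) 0) (famVtx n ((k+1 : ℕ) : Fin (n+1)) 2) :=
    fun k h2 => adjA (hsucc k) (vne k (k+1) (by omega) h2 (by omega) 0 2)
  have AB : ∀ k, k + 1 ≤ n →
      (famG n).Adj (famVtx n (k : Fin (n+1)) 3) (famVtx n ((k+1 : ℕ) : Fin (n+1)) 0) :=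
    fun k h2 => adjB (hsucc k) (vne k (k+1) (by omega) h2 (by omega) 3 0)
  -- boundary adjacencies
  have AA0 : (famG n).Adj (famVtx n 0 0) (famVtx n ((1:ℕ) : Fin (n+1)) 2) := by
    rw [hone]; exact adjAA0 hn
  have AB0 : (famG n).Adj (famVtx n 0 1) (famVtx n ((1:ℕ) : Fin (n+1)) 0) := by
    rw [hone]; exact adjAB0 hn
  have AAn : (famG n).Adj (famVtx n (n : Fin (n+1)) 0) (famVtx n 0 1) := by
    have h := adjA (n := n) (i := (n : Fin (n+1))) (i' := 0) hwrap.symm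
      (vne0 n (by omega) le_rfl 0 2)
    rwa [v02_eq] at h
  have ABn : (famG n).Adj (famVtx n (n : Fin (n+1)) 3) (famVtx n 0 0) :=
    adjB (n := n) (i := (n : Fin (n+1))) (i' := 0) hwrap.symm (vne0 n (by omega) le_rfl 3 0)
  -- value equalities for the parameters
  have ea1 : c (famVtx n 0 1) = a1 := ha1
  have eb0 : c (famVtx n ((1:ℕ) : Fin (n+1)) 0) = t01 := by rw [hone]; exact hb0
  have eb2 : c (famVtx n ((1:ℕ) : Fin (n+1)) 2) = t21 := by rw [hone]; exact hb2
  -- the invariant holds along the chain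
  have main : ∀ k, 1 ≤ k → k ≤ n →
      (c (famVtx n (k : Fin (n+1)) 0), c (famVtx n (k : Fin (n+1)) 1),
        c (famVtx n (k : Fin (n+1)) 2), c (famVtx n ((k-1 : ℕ) : Fin (n+1)) 3),
        c (famVtx n (k : Fin (n+1)) 3)) ∈ L := by
    intro k
    induction k with
    | zero => omega
    | succ m ih =>
      intro _ hm1
      by_cases hm : m = 0
      · subst hm
        have f1 : c (famVtx n ((1:ℕ) : Fin (n+1)) 1) ≠ c (famVtx n ((1:ℕ) : Fin (n+1)) 2) :=
          key _ _ (famVtx n ((1:ℕ) : Fin (n+1)) 3)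
            (vtx_ne_snd (hvne0 1 le_rfl (by omega)) (by decide))
            (A13 1 le_rfl (by omega)) (A23 1 le_rfl (by omega))
        have f2 : c (famVtx n ((1:ℕ) : Fin (n+1)) 1) ≠ c (famVtx n ((1:ℕ) : Fin (n+1)) 3) :=
          key _ _ (famVtx n ((1:ℕ) : Fin (n+1)) 2)
            (vtx_ne_snd (hvne0 1 le_rfl (by omega)) (by decide))
            (A12 1 le_rfl (by omega)) ((A23 1 le_rfl (by omega)).symm)
        have f3 : c (famVtx n ((1:ℕ) : Fin (n+1)) 2) ≠ c (famVtx n ((1:ℕ) : Fin (n+1)) 3) :=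
          key _ _ (famVtx n ((1:ℕ) : Fin (n+1)) 1)
            (vtx_ne_snd (hvne0 1 le_rfl (by omega)) (by decide))
            ((A12 1 le_rfl (by omega)).symm) ((A13 1 le_rfl (by omega)).symm)
        have f4 : c (famVtx n ((1:ℕ) : Fin (n+1)) 0) ≠ c (famVtx n ((1:ℕ) : Fin (n+1)) 2) :=
          key _ _ (famVtx n ((1:ℕ) : Fin (n+1)) 1)
            (vtx_ne_snd (hvne0 1 le_rfl (by omega)) (by decide))
            ((A10 1 le_rfl (by omega)).symm) ((A12 1 le_rfl (by omega)).symm)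
        have f5 : c (famVtx n ((1:ℕ) : Fin (n+1)) 0) ≠ c (famVtx n ((1:ℕ) : Fin (n+1)) 3) :=
          key _ _ (famVtx n ((1:ℕ) : Fin (n+1)) 1)
            (vtx_ne_snd (hvne0 1 le_rfl (by omega)) (by decide))
            ((A10 1 le_rfl (by omega)).symm) ((A13 1 le_rfl (by omega)).symm)
        have f6 : c (famVtx n ((1:ℕ) : Fin (n+1)) 1) ≠ c (famVtx n 0 1) :=
          key _ _ (famVtx n ((1:ℕ) : Fin (n+1)) 0)
            (vne0 1 le_rfl (by omega) 1 1)
            (A10 1 le_rfl (by omega)) AB0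
        have f7 : c (famVtx n ((1:ℕ) : Fin (n+1)) 1) ≠ c (famVtx n 0 0) :=
          key _ _ (famVtx n ((1:ℕ) : Fin (n+1)) 2)
            (vne0 1 le_rfl (by omega) 1 0)
            (A12 1 le_rfl (by omega)) AA0
        have f8 : c (famVtx n ((1:ℕ) : Fin (n+1)) 3) ≠ c (famVtx n 0 0) :=
          key _ _ (famVtx n ((1:ℕ) : Fin (n+1)) 2)
            (vne0 1 le_rfl (by omega) 3 0)
            ((A23 1 le_rfl (by omega)).symm) AA0
        have f9 : c (famVtx n ((1:ℕ) : Fin (n+1)) 0) ≠ c (famVtx n 0 0) :=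
          key _ _ (famVtx n 0 1)
            (vne0 1 le_rfl (by omega) 0 0)
            AB0.symm adj01
        have f10 : c (famVtx n ((1:ℕ) : Fin (n+1)) 2) ≠ c (famVtx n 0 1) :=
          key _ _ (famVtx n 0 0)
            (vne0 1 le_rfl (by omega) 2 1)
            AA0.symm adj01.symm
        have hmem := init_prop hinit (c (famVtx n ((1:ℕ) : Fin (n+1)) 1))
          (c (famVtx n ((1:ℕ) : Fin (n+1)) 3))
          (by rw [← eb2]; exact f1) f2 (by rw [← eb2]; exact f3)
          (by rw [← eb0, ← eb2]; exact f4) (by rw [← eb0]; exact f5)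
          (by rw [← ea1]; exact f6) (by rw [← ha0]; exact f7)
          (by rw [← ha0]; exact f8) (by rw [← eb0, ← ha0]; exact f9)
          (by rw [← eb2, ← ea1]; exact f10)
        have e03 : c (famVtx n ((0 : ℕ) : Fin (n+1)) 3) = a1 := by
          rw [hzero, v03_eq]; exact ha1
        show (c (famVtx n ((1:ℕ) : Fin (n+1)) 0), c (famVtx n ((1:ℕ) : Fin (n+1)) 1),
          c (famVtx n ((1:ℕ) : Fin (n+1)) 2), c (famVtx n ((0:ℕ) : Fin (n+1)) 3),
          c (famVtx n ((1:ℕ) : Fin (n+1)) 3)) ∈ L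
        rw [eb0, eb2, e03]
        exact hmem
      · -- step case
        have h1m : 1 ≤ m := by omega
        have hmn : m + 1 ≤ n := hm1
        have hmem := ih h1m (by omega)
        have f1 : c (famVtx n ((m+1 : ℕ) : Fin (n+1)) 1) ≠ c (famVtx n ((m+1 : ℕ) : Fin (n+1)) 2) :=
          key _ _ (famVtx n ((m+1 : ℕ) : Fin (n+1)) 3)
            (vtx_ne_snd (hvne0 (m+1) (by omega) hmn) (by decide))
            (A13 (m+1) (by omega) hmn) (A23 (m+1) (by omega) hmn)
        have f2 : c (famVtx n ((m+1 : ℕ) : Fin (n+1)) 1) ≠ c (famVtx n ((m+1 : ℕ) : Fin (n+1)) 3) :=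
          key _ _ (famVtx n ((m+1 : ℕ) : Fin (n+1)) 2)
            (vtx_ne_snd (hvne0 (m+1) (by omega) hmn) (by decide))
            (A12 (m+1) (by omega) hmn) ((A23 (m+1) (by omega) hmn).symm)
        have f3 : c (famVtx n ((m+1 : ℕ) : Fin (n+1)) 2) ≠ c (famVtx n ((m+1 : ℕ) : Fin (n+1)) 3) :=
          key _ _ (famVtx n ((m+1 : ℕ) : Fin (n+1)) 1)
            (vtx_ne_snd (hvne0 (m+1) (by omega) hmn) (by decide))
            ((A12 (m+1) (by omega) hmn).symm) ((A13 (m+1) (by omega) hmn).symm)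
        have f4 : c (famVtx n ((m+1 : ℕ) : Fin (n+1)) 0) ≠ c (famVtx n ((m+1 : ℕ) : Fin (n+1)) 2) :=
          key _ _ (famVtx n ((m+1 : ℕ) : Fin (n+1)) 1)
            (vtx_ne_snd (hvne0 (m+1) (by omega) hmn) (by decide))
            ((A10 (m+1) (by omega) hmn).symm) ((A12 (m+1) (by omega) hmn).symm)
        have f5 : c (famVtx n ((m+1 : ℕ) : Fin (n+1)) 0) ≠ c (famVtx n ((m+1 : ℕ) : Fin (n+1)) 3) :=
          key _ _ (famVtx n ((m+1 : ℕ) : Fin (n+1)) 1)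
            (vtx_ne_snd (hvne0 (m+1) (by omega) hmn) (by decide))
            ((A10 (m+1) (by omega) hmn).symm) ((A13 (m+1) (by omega) hmn).symm)
        have f6 : c (famVtx n ((m+1 : ℕ) : Fin (n+1)) 1) ≠ c (famVtx n (m : Fin (n+1)) 0) :=
          key _ _ (famVtx n ((m+1 : ℕ) : Fin (n+1)) 2)
            (vne (m+1) m hmn (by omega) (by omega) 1 0)
            (A12 (m+1) (by omega) hmn) (AA m hmn)
        have f7 : c (famVtx n ((m+1 : ℕ) : Fin (n+1)) 3) ≠ c (famVtx n (m : Fin (n+1)) 0) :=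
          key _ _ (famVtx n ((m+1 : ℕ) : Fin (n+1)) 2)
            (vne (m+1) m hmn (by omega) (by omega) 3 0)
            ((A23 (m+1) (by omega) hmn).symm) (AA m hmn)
        have f8 : c (famVtx n ((m+1 : ℕ) : Fin (n+1)) 0) ≠ c (famVtx n (m : Fin (n+1)) 1) :=
          key _ _ (famVtx n (m : Fin (n+1)) 3)
            (vne (m+1) m hmn (by omega) (by omega) 0 1)
            ((AB m hmn).symm) (A13 m h1m (by omega))
        have f9 : c (famVtx n ((m+1 : ℕ) : Fin (n+1)) 0) ≠ c (famVtx n (m : Fin (n+1)) 2) :=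
          key _ _ (famVtx n (m : Fin (n+1)) 3)
            (vne (m+1) m hmn (by omega) (by omega) 0 2)
            ((AB m hmn).symm) (A23 m h1m (by omega))
        have f10 : c (famVtx n ((m+1 : ℕ) : Fin (n+1)) 2) ≠ c (famVtx n (m : Fin (n+1)) 1) :=
          key _ _ (famVtx n (m : Fin (n+1)) 0)
            (vne (m+1) m hmn (by omega) (by omega) 2 1)
            ((AA m hmn).symm) (A10 m h1m (by omega))
        have hABm : (famG n).Adj (famVtx n ((m-1 : ℕ) : Fin (n+1)) 3) (famVtx n (m : Fin (n+1)) 0) := by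
          have h := AB (m-1) (by omega)
          rw [show m - 1 + 1 = m from by omega] at h
          exact h
        have f11 : c (famVtx n ((m+1 : ℕ) : Fin (n+1)) 2) ≠ c (famVtx n ((m-1 : ℕ) : Fin (n+1)) 3) :=
          key _ _ (famVtx n (m : Fin (n+1)) 0)
            (vne (m+1) (m-1) hmn (by omega) (by omega) 2 3)
            ((AA m hmn).symm) hABm
        have f12 : c (famVtx n ((m+1 : ℕ) : Fin (n+1)) 1) ≠ c (famVtx n (m : Fin (n+1)) 3) :=
          key _ _ (famVtx n ((m+1 : ℕ) : Fin (n+1)) 0)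
            (vne (m+1) m hmn (by omega) (by omega) 1 3)
            (A10 (m+1) (by omega) hmn) (AB m hmn)
        have hres := step_prop hstep _ hmem
          (c (famVtx n ((m+1 : ℕ) : Fin (n+1)) 0)) (c (famVtx n ((m+1 : ℕ) : Fin (n+1)) 1))
          (c (famVtx n ((m+1 : ℕ) : Fin (n+1)) 2)) (c (famVtx n ((m+1 : ℕ) : Fin (n+1)) 3))
          f1 f2 f3 f4 f5 f6 f7 f8 f9 f10 f11 f12
        simpa only [Nat.add_sub_cancel] using hres
  have hmemn := main n (by omega) le_rfl
  have c1 : c (famVtx n (n : Fin (n+1)) 0) ≠ c (famVtx n 0 0) :=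
    key _ _ (famVtx n 0 1) (vne0 n (by omega) le_rfl 0 0) AAn adj01
  have c2 : c (famVtx n (n : Fin (n+1)) 0) ≠ c (famVtx n ((1:ℕ) : Fin (n+1)) 0) :=
    key _ _ (famVtx n 0 1) (vne n 1 le_rfl (by omega) (by omega) 0 0) AAn AB0.symm
  have c3 : c (famVtx n (n : Fin (n+1)) 3) ≠ c (famVtx n 0 1) :=
    key _ _ (famVtx n 0 0) (vne0 n (by omega) le_rfl 3 1) ABn adj01.symm
  have c4 : c (famVtx n (n : Fin (n+1)) 3) ≠ c (famVtx n ((1:ℕ) : Fin (n+1)) 2) :=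
    key _ _ (famVtx n 0 0) (vne n 1 le_rfl (by omega) (by omega) 3 2) ABn AA0.symm
  have c5 : c (famVtx n 0 0) ≠ c (famVtx n (n : Fin (n+1)) 1) :=
    key _ _ (famVtx n (n : Fin (n+1)) 3) (vne0 n (by omega) le_rfl 1 0).symm
      ABn.symm (A13 n (by omega) le_rfl)
  have c6 : c (famVtx n 0 0) ≠ c (famVtx n (n : Fin (n+1)) 2) :=
    key _ _ (famVtx n (n : Fin (n+1)) 3) (vne0 n (by omega) le_rfl 2 0).symm
      ABn.symm (A23 n (by omega) le_rfl)
  have c7 : c (famVtx n (n : Fin (n+1)) 1) ≠ c (famVtx n 0 1) :=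
    key _ _ (famVtx n (n : Fin (n+1)) 0) (vne0 n (by omega) le_rfl 1 1)
      (A10 n (by omega) le_rfl) AAn.symm
  have hABn1 : (famG n).Adj (famVtx n ((n-1 : ℕ) : Fin (n+1)) 3) (famVtx n (n : Fin (n+1)) 0) := by
    have h := AB (n-1) (by omega)
    rw [show n - 1 + 1 = n from by omega] at h
    exact h
  have c8 : c (famVtx n ((n-1 : ℕ) : Fin (n+1)) 3) ≠ c (famVtx n 0 1) :=
    key _ _ (famVtx n (n : Fin (n+1)) 0)
      (vtx_ne_fst (by rw [hcast (n-1) (by omega), Fin.val_zero]; omega) 3 1)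
      hABn1 AAn.symm
  exact close_prop hclose _ hmemn
    (by rw [← ha0]; exact c1) (by rw [← eb0]; exact c2)
    (by rw [← ea1]; exact c3) (by rw [← eb2]; exact c4)
    (by rw [← ha0]; exact c5) (by rw [← ha0]; exact c6)
    (by rw [← ea1]; exact c7) (by rw [← ea1]; exact c8)

end FamAux

open FamAux in
/-- For every odd `n ≥ 3`, the graph `G_n` admits no injective 4-colouring. -/
theorem famG_no_inj_four_coloring (n : ℕ) (hn : 3 ≤ n) (hodd : Odd n) :
    ¬ ∃ c : FamV n → Fin 4, IsInjColoring (famG n) c := by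
  rintro ⟨c0, hc0⟩
  have key0 : ∀ x y w : FamV n, x ≠ y → (famG n).Adj x w → (famG n).Adj y w → c0 x ≠ c0 y :=
    fun x y w hxy h1 h2 => hc0 x y hxy ⟨w, h1, h2⟩
  have hone_ne : (1 : Fin (n+1)).val ≠ 0 := by rw [val_one hn]; omega
  have g1 : c0 (famVtx n 0 0) ≠ c0 (famVtx n 1 0) :=
    key0 _ _ (famVtx n 0 1)
      (vtx_ne_fst (by rw [Fin.val_zero, val_one hn]; omega) 0 0)
      adj01 (adjAB0 hn).symm
  have g2 : c0 (famVtx n 0 1) ≠ c0 (famVtx n 1 2) :=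
    key0 _ _ (famVtx n 0 0)
      (vtx_ne_fst (by rw [Fin.val_zero, val_one hn]; omega) 1 2)
      adj01.symm (adjAA0 hn).symm
  have g3 : c0 (famVtx n 1 0) ≠ c0 (famVtx n 1 2) :=
    key0 _ _ (famVtx n 1 1) (vtx_ne_snd hone_ne (by decide))
      (adj10 (one_ne_zero' hn) (vtx_ne_snd hone_ne (by decide))).symm
      (adj12 (one_ne_zero' hn) (vtx_ne_snd hone_ne (by decide))).symm
  obtain ⟨s0, s1, s2, s3, d01, d02, d03, d12, d13, d23, hcases⟩ :=
    norm_exists _ _ _ _ g1 g2 g3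
  have hinj := mkPerm_inj d01 d02 d03 d12 d13 d23
  have hc : IsInjColoring (famG n) (fun x => mkPerm s0 s1 s2 s3 (c0 x)) :=
    fun u v huv hw he => hc0 u v huv hw (hinj he)
  rcases hcases with h | h | h | h | h
  · obtain ⟨e1, e2, e3, e4⟩ : _ ∧ _ ∧ _ ∧ _ := by simpa using h
    exact master hn _ hc _ _ _ _ _ e1 e2 e3 e4 check0123
  · obtain ⟨e1, e2, e3, e4⟩ : _ ∧ _ ∧ _ ∧ _ := by simpa using h
    exact master hn _ hc _ _ _ _ _ e1 e2 e3 e4 check0012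
  · obtain ⟨e1, e2, e3, e4⟩ : _ ∧ _ ∧ _ ∧ _ := by simpa using h
    exact master hn _ hc _ _ _ _ _ e1 e2 e3 e4 check0120
  · obtain ⟨e1, e2, e3, e4⟩ : _ ∧ _ ∧ _ ∧ _ := by simpa using h
    exact master hn _ hc _ _ _ _ _ e1 e2 e3 e4 check0112
  · obtain ⟨e1, e2, e3, e4⟩ : _ ∧ _ ∧ _ ∧ _ := by simpa using h
    exact master hn _ hc _ _ _ _ _ e1 e2 e3 e4 check0110
end

section
/- Let H be a 3-connected graph, let uvw be a triangle in H, and let H' be obtained from H by subdividing the edge uv with a new vertex w' and adding the edge ww'. Then H' is 3-connected. -/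
/-- A graph is 3-connected: it has at least 4 vertices and remains connected
after deleting any two vertices. -/
def ThreeConnected {V : Type} (G : SimpleGraph V) : Prop :=
  4 ≤ Nat.card V ∧ G.Connected ∧
    ∀ a b : V, (G.induce {x : V | x ≠ a ∧ x ≠ b}).Connected

/-- The graph obtained from `G` by subdividing the edge `u v` with a new vertex
`none` and adding an edge from `w` to the new vertex. Old vertices are encoded
via `some`. -/
def subdivideAdd {V : Type} (G : SimpleGraph V) (u v w : V) :
    SimpleGraph (Option V) where
  Adj x y :=
    (∃ a b : V, x = some a ∧ y = some b ∧ G.Adj a b ∧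
      ¬(a = u ∧ b = v) ∧ ¬(a = v ∧ b = u)) ∨
    (x = none ∧ ∃ b : V, y = some b ∧ (b = u ∨ b = v ∨ b = w)) ∨
    (y = none ∧ ∃ a : V, x = some a ∧ (a = u ∨ a = v ∨ a = w))
  symm := ⟨by
    rintro x y (⟨a, b, rfl, rfl, hab, h1, h2⟩ | ⟨rfl, b, rfl, hb⟩ | ⟨rfl, a, rfl, ha⟩)
    · exact Or.inl ⟨b, a, rfl, rfl, hab.symm, fun h => h2 ⟨h.2, h.1⟩, fun h => h1 ⟨h.2, h.1⟩⟩
    · exact Or.inr (Or.inr ⟨rfl, b, rfl, hb⟩)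
    · exact Or.inr (Or.inl ⟨rfl, a, rfl, ha⟩)⟩
  loopless := ⟨by
    rintro x (⟨a, b, rfl, hb, hab, -, -⟩ | ⟨rfl, b, hb, -⟩ | ⟨rfl, a, ha, -⟩)
    · rw [Option.some_inj] at hb; subst hb; exact G.loopless.irrefl a hab
    · cases hb
    · cases ha⟩

namespace SubdivAux

open SimpleGraph

lemma induce_adj' {α : Type} (A : SimpleGraph α) (s : Set α) (p q : s) :
    (A.induce s).Adj p q ↔ A.Adj p.val q.val := Iff.rfl

lemma reach_lift {α β : Type} {A : SimpleGraph α} {B : SimpleGraph β} (f : α → β)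
    (h : ∀ x y : α, A.Adj x y → B.Reachable (f x) (f y)) {x y : α}
    (hxy : A.Reachable x y) : B.Reachable (f x) (f y) := by
  obtain ⟨p⟩ := hxy
  induction p with
  | nil => exact Reachable.refl _
  | cons ha _ ih => exact (h _ _ ha).trans ih

lemma exists_ne₃ {V : Type} (h : 4 ≤ Nat.card V) (a b c : V) :
    ∃ y : V, y ≠ a ∧ y ≠ b ∧ y ≠ c := by
  have hf : Finite V := Nat.finite_of_card_ne_zero (by omega)
  have := Fintype.ofFinite V
  rw [Nat.card_eq_fintype_card] at h
  classical
  have h3 : ({a, b, c} : Finset V).card ≤ 3 := by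
    refine (Finset.card_insert_le _ _).trans (Nat.succ_le_succ ?_)
    refine (Finset.card_insert_le _ _).trans (Nat.succ_le_succ ?_)
    simp
  have h4 : 0 < (Finset.univ \ ({a, b, c} : Finset V)).card := by
    have h5 := Finset.le_card_sdiff ({a, b, c} : Finset V) Finset.univ
    have hcu : Finset.univ.card = Fintype.card V := Finset.card_univ
    omega
  obtain ⟨y, hy⟩ := Finset.card_pos.mp h4
  simp only [Finset.mem_sdiff, Finset.mem_insert, Finset.mem_singleton] at hy
  exact ⟨y, by tauto, by tauto, by tauto⟩

/-- In a 3-connected graph every vertex has a neighbour avoiding any two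
given vertices. -/
lemma exists_adj_ne {V : Type} (G : SimpleGraph V) (h3 : ThreeConnected G) (x c d : V) :
    ∃ z, G.Adj x z ∧ z ≠ c ∧ z ≠ d := by
  by_contra hcon
  push_neg at hcon
  obtain ⟨hcard, -, hind⟩ := h3
  obtain ⟨a, b, hxa, hxb, hnb⟩ : ∃ a b : V, x ≠ a ∧ x ≠ b ∧
      ∀ z, G.Adj x z → z = a ∨ z = b := by
    by_cases hxc : x = c
    · by_cases hxd : x = d
      · obtain ⟨e, he⟩ := exists_ne₃ hcard x x x
        obtain ⟨f, hf⟩ := exists_ne₃ hcard x e e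
        refine ⟨e, f, Ne.symm he.1, Ne.symm hf.1, fun z hz => ?_⟩
        exfalso
        have hzc : z ≠ c := fun h => G.ne_of_adj hz (hxc.trans h.symm)
        exact G.ne_of_adj hz (hxd.trans (hcon z hz hzc).symm)
      · obtain ⟨e, he⟩ := exists_ne₃ hcard x d d
        refine ⟨d, e, hxd, Ne.symm he.1, fun z hz => ?_⟩
        left
        exact hcon z hz (fun h => G.ne_of_adj hz (hxc.trans h.symm))
    · by_cases hxd : x = d
      · obtain ⟨e, he⟩ := exists_ne₃ hcard x c c
        refine ⟨c, e, hxc, Ne.symm he.1, fun z hz => ?_⟩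
        by_cases hzc : z = c
        · exact Or.inl hzc
        · exact absurd ((hcon z hz hzc).trans hxd.symm).symm (G.ne_of_adj hz)
      · refine ⟨c, d, hxc, hxd, fun z hz => ?_⟩
        by_cases hzc : z = c
        · exact Or.inl hzc
        · exact Or.inr (hcon z hz hzc)
  obtain ⟨y, hya, hyb, hyx⟩ := exists_ne₃ hcard a b x
  have hc := (hind a b).preconnected ⟨x, hxa, hxb⟩ ⟨y, hya, hyb⟩
  obtain ⟨p⟩ := hc
  cases p with
  | nil => exact hyx rfl
  | cons ha _ =>
    rename_i q _
    have hadj : G.Adj x q.val := ha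
    rcases hnb q.val hadj with h | h
    · exact q.2.1 h
    · exact q.2.2 h


lemma case_none_none {V : Type} (G : SimpleGraph V) (u v w : V)
    (h3 : ThreeConnected G) (huv : G.Adj u v) :
    ((subdivideAdd G u v w).induce
      {x : Option V | x ≠ (none : Option V) ∧ x ≠ (none : Option V)}).Connected := by
  have hind := h3.2.2
  have mem : ∀ z : V, some z ∈ {x : Option V | x ≠ (none : Option V) ∧ x ≠ (none : Option V)} :=
    fun z => ⟨Option.some_ne_none z, Option.some_ne_none z⟩
  have key : ∀ x : V, x ≠ u → x ≠ v →
      ((subdivideAdd G u v w).induce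
        {x : Option V | x ≠ (none : Option V) ∧ x ≠ (none : Option V)}).Reachable
        ⟨some x, mem x⟩ ⟨some v, mem v⟩ := by
    intro x hxu hxv
    have hre := (hind u u).preconnected ⟨x, hxu, hxu⟩ ⟨v, huv.ne', huv.ne'⟩
    have step : ∀ z₁ z₂ : {z : V // z ≠ u ∧ z ≠ u},
        (G.induce {z : V | z ≠ u ∧ z ≠ u}).Adj z₁ z₂ →
        ((subdivideAdd G u v w).induce
          {x : Option V | x ≠ (none : Option V) ∧ x ≠ (none : Option V)}).Reachable
          ⟨some z₁.1, mem z₁.1⟩ ⟨some z₂.1, mem z₂.1⟩ :=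
      fun z₁ z₂ hz => SimpleGraph.Adj.reachable
        (Or.inl ⟨z₁.1, z₂.1, rfl, rfl, hz, fun h => z₁.2.1 h.1, fun h => z₂.2.1 h.2⟩)
    exact reach_lift
      (B := (subdivideAdd G u v w).induce
        {x : Option V | x ≠ (none : Option V) ∧ x ≠ (none : Option V)})
      (fun z => ⟨some z.1, mem z.1⟩) step hre
  have keyall : ∀ x : V,
      ((subdivideAdd G u v w).induce
        {x : Option V | x ≠ (none : Option V) ∧ x ≠ (none : Option V)}).Reachable
        ⟨some x, mem x⟩ ⟨some v, mem v⟩ := by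
    intro x
    by_cases hxv : x = v
    · have he : (⟨some x, mem x⟩ :
          ↑{x : Option V | x ≠ (none : Option V) ∧ x ≠ (none : Option V)}) =
          ⟨some v, mem v⟩ := Subtype.ext (congrArg some hxv)
      rw [he]
    by_cases hxu : x = u
    · have he : (⟨some x, mem x⟩ :
          ↑{x : Option V | x ≠ (none : Option V) ∧ x ≠ (none : Option V)}) =
          ⟨some u, mem u⟩ := Subtype.ext (congrArg some hxu)
      rw [he]
      obtain ⟨z, hz, hzv, -⟩ := exists_adj_ne G h3 u v v
      have e1 : ((subdivideAdd G u v w).induce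
          {x : Option V | x ≠ (none : Option V) ∧ x ≠ (none : Option V)}).Adj
          ⟨some u, mem u⟩ ⟨some z, mem z⟩ :=
        Or.inl ⟨u, z, rfl, rfl, hz, fun h => hzv h.2, fun h => huv.ne h.1⟩
      exact e1.reachable.trans (key z hz.ne' hzv)
    · exact key x hxu hxv
  haveI : Nonempty ↑{x : Option V | x ≠ (none : Option V) ∧ x ≠ (none : Option V)} :=
    ⟨⟨some v, mem v⟩⟩
  refine ⟨?_⟩
  rintro ⟨(_ | x), hp⟩ ⟨(_ | y), hq⟩
  · exact absurd rfl hp.1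
  · exact absurd rfl hp.1
  · exact absurd rfl hq.1
  · exact (keyall x).trans (keyall y).symm

lemma case_none_some {V : Type} (G : SimpleGraph V) (u v w : V)
    (h3 : ThreeConnected G) (huv : G.Adj u v) (hvw : G.Adj v w) (huw : G.Adj u w) (c : V) :
    ((subdivideAdd G u v w).induce
      {x : Option V | x ≠ (none : Option V) ∧ x ≠ some c}).Connected := by
  have hind := h3.2.2
  have mem : ∀ z : V, z ≠ c →
      some z ∈ {x : Option V | x ≠ (none : Option V) ∧ x ≠ some c} :=
    fun z hz => ⟨Option.some_ne_none z, fun h => hz (Option.some.inj h)⟩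
  by_cases hvc : v = c
  · -- the deleted old vertex is v
    have huc : u ≠ c := fun h => huv.ne (h.trans hvc.symm)
    haveI : Nonempty ↑{x : Option V | x ≠ (none : Option V) ∧ x ≠ some c} :=
      ⟨⟨some u, mem u huc⟩⟩
    refine ⟨?_⟩
    rintro ⟨(_ | x), hp⟩ ⟨(_ | y), hq⟩
    · exact absurd rfl hp.1
    · exact absurd rfl hp.1
    · exact absurd rfl hq.1
    · have hxc : x ≠ c := fun h => hp.2 (congrArg some h)
      have hyc : y ≠ c := fun h => hq.2 (congrArg some h)
      have hre := (hind c c).preconnected ⟨x, hxc, hxc⟩ ⟨y, hyc, hyc⟩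
      have step : ∀ z₁ z₂ : {z : V // z ≠ c ∧ z ≠ c},
          (G.induce {z : V | z ≠ c ∧ z ≠ c}).Adj z₁ z₂ →
          ((subdivideAdd G u v w).induce
            {x : Option V | x ≠ (none : Option V) ∧ x ≠ some c}).Reachable
            ⟨some z₁.1, mem z₁.1 z₁.2.1⟩ ⟨some z₂.1, mem z₂.1 z₂.2.1⟩ :=
        fun z₁ z₂ hz => SimpleGraph.Adj.reachable
          (Or.inl ⟨z₁.1, z₂.1, rfl, rfl, hz,
            fun h => z₂.2.1 (h.2.trans hvc), fun h => z₁.2.1 (h.1.trans hvc)⟩)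
      exact reach_lift
        (B := (subdivideAdd G u v w).induce
          {x : Option V | x ≠ (none : Option V) ∧ x ≠ some c})
        (fun z => ⟨some z.1, mem z.1 z.2.1⟩) step hre
  by_cases huc : u = c
  · -- the deleted old vertex is u
    have hvc' : v ≠ c := hvc
    haveI : Nonempty ↑{x : Option V | x ≠ (none : Option V) ∧ x ≠ some c} :=
      ⟨⟨some v, mem v hvc'⟩⟩
    refine ⟨?_⟩
    rintro ⟨(_ | x), hp⟩ ⟨(_ | y), hq⟩
    · exact absurd rfl hp.1
    · exact absurd rfl hp.1
    · exact absurd rfl hq.1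
    · have hxc : x ≠ c := fun h => hp.2 (congrArg some h)
      have hyc : y ≠ c := fun h => hq.2 (congrArg some h)
      have hre := (hind c c).preconnected ⟨x, hxc, hxc⟩ ⟨y, hyc, hyc⟩
      have step : ∀ z₁ z₂ : {z : V // z ≠ c ∧ z ≠ c},
          (G.induce {z : V | z ≠ c ∧ z ≠ c}).Adj z₁ z₂ →
          ((subdivideAdd G u v w).induce
            {x : Option V | x ≠ (none : Option V) ∧ x ≠ some c}).Reachable
            ⟨some z₁.1, mem z₁.1 z₁.2.1⟩ ⟨some z₂.1, mem z₂.1 z₂.2.1⟩ :=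
        fun z₁ z₂ hz => SimpleGraph.Adj.reachable
          (Or.inl ⟨z₁.1, z₂.1, rfl, rfl, hz,
            fun h => z₁.2.1 (h.1.trans huc), fun h => z₂.2.1 (h.2.trans huc)⟩)
      exact reach_lift
        (B := (subdivideAdd G u v w).induce
          {x : Option V | x ≠ (none : Option V) ∧ x ≠ some c})
        (fun z => ⟨some z.1, mem z.1 z.2.1⟩) step hre
  · -- both u and v survive
    have key : ∀ (x : V) (hxc : x ≠ c), x ≠ u → x ≠ v →
        ((subdivideAdd G u v w).induce
          {x : Option V | x ≠ (none : Option V) ∧ x ≠ some c}).Reachable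
          ⟨some x, mem x hxc⟩ ⟨some v, mem v hvc⟩ := by
      intro x hxc hxu hxv
      have hre := (hind c u).preconnected ⟨x, hxc, hxu⟩ ⟨v, hvc, huv.ne'⟩
      have step : ∀ z₁ z₂ : {z : V // z ≠ c ∧ z ≠ u},
          (G.induce {z : V | z ≠ c ∧ z ≠ u}).Adj z₁ z₂ →
          ((subdivideAdd G u v w).induce
            {x : Option V | x ≠ (none : Option V) ∧ x ≠ some c}).Reachable
            ⟨some z₁.1, mem z₁.1 z₁.2.1⟩ ⟨some z₂.1, mem z₂.1 z₂.2.1⟩ :=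
        fun z₁ z₂ hz => SimpleGraph.Adj.reachable
          (Or.inl ⟨z₁.1, z₂.1, rfl, rfl, hz,
            fun h => z₁.2.2 h.1, fun h => z₂.2.2 h.2⟩)
      exact reach_lift
        (B := (subdivideAdd G u v w).induce
          {x : Option V | x ≠ (none : Option V) ∧ x ≠ some c})
        (fun z => ⟨some z.1, mem z.1 z.2.1⟩) step hre
    have keyall : ∀ x : V, ∀ hxc : x ≠ c,
        ((subdivideAdd G u v w).induce
          {x : Option V | x ≠ (none : Option V) ∧ x ≠ some c}).Reachable
          ⟨some x, mem x hxc⟩ ⟨some v, mem v hvc⟩ := by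
      intro x hxc
      by_cases hxv : x = v
      · have he : (⟨some x, mem x hxc⟩ :
            ↑{x : Option V | x ≠ (none : Option V) ∧ x ≠ some c}) =
            ⟨some v, mem v hvc⟩ := Subtype.ext (congrArg some hxv)
        rw [he]
      by_cases hxu : x = u
      · have he : (⟨some x, mem x hxc⟩ :
            ↑{x : Option V | x ≠ (none : Option V) ∧ x ≠ some c}) =
            ⟨some u, mem u huc⟩ := Subtype.ext (congrArg some hxu)
        rw [he]
        obtain ⟨z, hz, hzc, hzv⟩ := exists_adj_ne G h3 u c v
        have e1 : ((subdivideAdd G u v w).induce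
            {x : Option V | x ≠ (none : Option V) ∧ x ≠ some c}).Adj
            ⟨some u, mem u huc⟩ ⟨some z, mem z hzc⟩ :=
          Or.inl ⟨u, z, rfl, rfl, hz, fun h => hzv h.2, fun h => huv.ne h.1⟩
        exact e1.reachable.trans (key z hzc hz.ne' hzv)
      · exact key x hxc hxu hxv
    haveI : Nonempty ↑{x : Option V | x ≠ (none : Option V) ∧ x ≠ some c} :=
      ⟨⟨some v, mem v hvc⟩⟩
    refine ⟨?_⟩
    rintro ⟨(_ | x), hp⟩ ⟨(_ | y), hq⟩
    · exact absurd rfl hp.1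
    · exact absurd rfl hp.1
    · exact absurd rfl hq.1
    · have hxc : x ≠ c := fun h => hp.2 (congrArg some h)
      have hyc : y ≠ c := fun h => hq.2 (congrArg some h)
      exact (keyall x hxc).trans (keyall y hyc).symm

lemma case_some_some {V : Type} (G : SimpleGraph V) (u v w : V)
    (h3 : ThreeConnected G) (huv : G.Adj u v) (hvw : G.Adj v w) (huw : G.Adj u w) (c d : V) :
    ((subdivideAdd G u v w).induce
      {x : Option V | x ≠ some c ∧ x ≠ some d}).Connected := by
  have hind := h3.2.2
  have hnone : (none : Option V) ∈ {x : Option V | x ≠ some c ∧ x ≠ some d} :=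
    ⟨fun h => (by cases h), fun h => (by cases h)⟩
  have mem : ∀ z : V, z ≠ c → z ≠ d →
      some z ∈ {x : Option V | x ≠ some c ∧ x ≠ some d} :=
    fun z h1 h2 => ⟨fun h => h1 (Option.some.inj h), fun h => h2 (Option.some.inj h)⟩
  obtain ⟨t, ht, htc, htd⟩ : ∃ t, (t = u ∨ t = v ∨ t = w) ∧ t ≠ c ∧ t ≠ d := by
    have h1 : u ≠ v := huv.ne
    have h2 : v ≠ w := hvw.ne
    have h3' : u ≠ w := huw.ne
    by_cases huc : u = c
    · by_cases hvd : v = d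
      · exact ⟨w, Or.inr (Or.inr rfl), fun h => h3' (huc.trans h.symm),
          fun h => h2 (hvd.trans h.symm)⟩
      · by_cases hvc : v = c
        · exact absurd (huc.trans hvc.symm) h1
        · exact ⟨v, Or.inr (Or.inl rfl), hvc, hvd⟩
    · by_cases hud : u = d
      · by_cases hvc : v = c
        · exact ⟨w, Or.inr (Or.inr rfl), fun h => h2 (hvc.trans h.symm),
            fun h => h3' (hud.trans h.symm)⟩
        · by_cases hvd : v = d
          · exact absurd (hud.trans hvd.symm) h1
          · exact ⟨v, Or.inr (Or.inl rfl), hvc, hvd⟩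
      · exact ⟨u, Or.inl rfl, huc, hud⟩
  have step : ∀ z₁ z₂ : {z : V // z ≠ c ∧ z ≠ d}, (G.induce {z : V | z ≠ c ∧ z ≠ d}).Adj z₁ z₂ →
      ((subdivideAdd G u v w).induce
        {x : Option V | x ≠ some c ∧ x ≠ some d}).Reachable
        ⟨some z₁.1, mem z₁.1 z₁.2.1 z₁.2.2⟩ ⟨some z₂.1, mem z₂.1 z₂.2.1 z₂.2.2⟩ := by
    intro z₁ z₂ hz
    by_cases hp : (z₁.1 = u ∧ z₂.1 = v) ∨ (z₁.1 = v ∧ z₂.1 = u)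
    · have e₁ : ((subdivideAdd G u v w).induce
          {x : Option V | x ≠ some c ∧ x ≠ some d}).Adj
          ⟨some z₁.1, mem z₁.1 z₁.2.1 z₁.2.2⟩ ⟨none, hnone⟩ := by
        refine Or.inr (Or.inr ⟨rfl, z₁.1, rfl, ?_⟩)
        rcases hp with ⟨h, -⟩ | ⟨h, -⟩
        · exact Or.inl h
        · exact Or.inr (Or.inl h)
      have e₂ : ((subdivideAdd G u v w).induce
          {x : Option V | x ≠ some c ∧ x ≠ some d}).Adj
          ⟨none, hnone⟩ ⟨some z₂.1, mem z₂.1 z₂.2.1 z₂.2.2⟩ := by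
        refine Or.inr (Or.inl ⟨rfl, z₂.1, rfl, ?_⟩)
        rcases hp with ⟨-, h⟩ | ⟨-, h⟩
        · exact Or.inr (Or.inl h)
        · exact Or.inl h
      exact e₁.reachable.trans e₂.reachable
    · exact SimpleGraph.Adj.reachable
        (Or.inl ⟨z₁.1, z₂.1, rfl, rfl, hz,
          fun h => hp (Or.inl h), fun h => hp (Or.inr h)⟩)
  have key : ∀ (x y : V) (hxc : x ≠ c) (hxd : x ≠ d) (hyc : y ≠ c) (hyd : y ≠ d),
      ((subdivideAdd G u v w).induce
        {x : Option V | x ≠ some c ∧ x ≠ some d}).Reachable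
        ⟨some x, mem x hxc hxd⟩ ⟨some y, mem y hyc hyd⟩ := by
    intro x y hxc hxd hyc hyd
    exact reach_lift
      (B := (subdivideAdd G u v w).induce
        {x : Option V | x ≠ some c ∧ x ≠ some d})
      (fun z => ⟨some z.1, mem z.1 z.2.1 z.2.2⟩) step
      ((hind c d).preconnected ⟨x, hxc, hxd⟩ ⟨y, hyc, hyd⟩)
  have et : ((subdivideAdd G u v w).induce
      {x : Option V | x ≠ some c ∧ x ≠ some d}).Adj
      ⟨none, hnone⟩ ⟨some t, mem t htc htd⟩ :=
    Or.inr (Or.inl ⟨rfl, t, rfl, ht⟩)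
  haveI : Nonempty ↑{x : Option V | x ≠ some c ∧ x ≠ some d} := ⟨⟨none, hnone⟩⟩
  refine ⟨?_⟩
  rintro ⟨(_ | x), hp⟩ ⟨(_ | y), hq⟩
  · exact SimpleGraph.Reachable.refl _
  · have hyc : y ≠ c := fun h => hq.1 (congrArg some h)
    have hyd : y ≠ d := fun h => hq.2 (congrArg some h)
    exact et.reachable.trans (key t y htc htd hyc hyd)
  · have hxc : x ≠ c := fun h => hp.1 (congrArg some h)
    have hxd : x ≠ d := fun h => hp.2 (congrArg some h)
    exact ((et.reachable.trans (key t x htc htd hxc hxd))).symm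
  · have hxc : x ≠ c := fun h => hp.1 (congrArg some h)
    have hxd : x ≠ d := fun h => hp.2 (congrArg some h)
    have hyc : y ≠ c := fun h => hq.1 (congrArg some h)
    have hyd : y ≠ d := fun h => hq.2 (congrArg some h)
    exact key x y hxc hxd hyc hyd

lemma conn' {V : Type} (G : SimpleGraph V) (u v w : V)
    (h3 : ThreeConnected G) (huv : G.Adj u v) :
    (subdivideAdd G u v w).Connected := by
  have step : ∀ x y : V, G.Adj x y → (subdivideAdd G u v w).Reachable (some x) (some y) := by
    intro x y hxy
    by_cases hp : (x = u ∧ y = v) ∨ (x = v ∧ y = u)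
    · have e₁ : (subdivideAdd G u v w).Adj (some x) none := by
        refine Or.inr (Or.inr ⟨rfl, x, rfl, ?_⟩)
        rcases hp with ⟨h, -⟩ | ⟨h, -⟩
        · exact Or.inl h
        · exact Or.inr (Or.inl h)
      have e₂ : (subdivideAdd G u v w).Adj none (some y) := by
        refine Or.inr (Or.inl ⟨rfl, y, rfl, ?_⟩)
        rcases hp with ⟨-, h⟩ | ⟨-, h⟩
        · exact Or.inr (Or.inl h)
        · exact Or.inl h
      exact e₁.reachable.trans e₂.reachable
    · exact SimpleGraph.Adj.reachable
        (Or.inl ⟨x, y, rfl, rfl, hxy, fun h => hp (Or.inl h), fun h => hp (Or.inr h)⟩)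
  have base : ∀ p : Option V, (subdivideAdd G u v w).Reachable p (some u) := by
    intro p
    cases p with
    | none => exact SimpleGraph.Adj.reachable (Or.inr (Or.inl ⟨rfl, u, rfl, Or.inl rfl⟩))
    | some x => exact reach_lift some step (h3.2.1.preconnected x u)
  haveI : Nonempty (Option V) := ⟨none⟩
  exact ⟨fun p q => (base p).trans (base q).symm⟩

end SubdivAux

/-- If `H` is 3-connected and `u v w` is a triangle of `H`, then the graph
obtained by subdividing the edge `u v` with a new vertex `w'` and adding the
edge `w w'` is 3-connected. -/
theorem subdivideAdd_threeConnected {V : Type} (G : SimpleGraph V) (u v w : V)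
    (h3 : ThreeConnected G) (huv : G.Adj u v) (hvw : G.Adj v w) (huw : G.Adj u w) :
    ThreeConnected (subdivideAdd G u v w) := by
  refine ⟨?_, SubdivAux.conn' G u v w h3 huv, ?_⟩
  · have hfin : Finite V := Nat.finite_of_card_ne_zero (by have := h3.1; omega)
    haveI := Fintype.ofFinite V
    have h1 := h3.1
    rw [Nat.card_eq_fintype_card] at h1 ⊢
    rw [Fintype.card_option]
    omega
  · intro a b
    match a, b with
    | none, none => exact SubdivAux.case_none_none G u v w h3 huv
    | none, some c => exact SubdivAux.case_none_some G u v w h3 huv hvw huw c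
    | some c, none =>
      have hset : {x : Option V | x ≠ some c ∧ x ≠ none} =
          {x : Option V | x ≠ (none : Option V) ∧ x ≠ some c} := by
        ext x; exact and_comm
      rw [hset]
      exact SubdivAux.case_none_some G u v w h3 huv hvw huw c
    | some c, some d => exact SubdivAux.case_some_some G u v w h3 huv hvw huw c d
end

section
/- For r ≥ 5 with r ≡ 0 (mod 3), the generalised dodecahedron D_r admits an injective 3-colouring: assigning to v_i, v'_i the colour (i mod 3), and to u'_i the unique colour in {0,1,2} different from (i mod 3) and ((i+1) mod 3), and colouring the u-cycle consistently, yields an injective 3-colouring. -/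
set_option maxHeartbeats 1000000 in
/-- For `r ≥ 5` with `3 ∣ r`, assigning colour `i mod 3` to `v_i` and `v'_i`
and colour `(i + 2) mod 3` (the unique colour in `{0,1,2}` different from
`i mod 3` and `(i+1) mod 3`) to `u'_i`, and colouring the `u`-cycle
consistently (`u_i` also gets `(i + 2) mod 3`), yields an injective
3-colouring of the generalised dodecahedron `D_r`. -/
theorem genDodec_explicit_three_coloring (r : ℕ) (hr : 5 ≤ r) (hdvd : 3 ∣ r) :
    IsInjColoring (genDodec r)
      (fun x => (⟨(x.1.val + if x.2.val = 1 ∨ x.2.val = 3 then 0 else 2) % 3,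
        Nat.mod_lt _ (by norm_num)⟩ : Fin 3)) := by
  obtain ⟨k, rfl⟩ := hdvd
  rintro u v hne ⟨w, hwa, hwb⟩
  obtain ⟨-, ha⟩ : u ≠ w ∧ (dodecRel (3 * k) u w ∨ dodecRel (3 * k) w u) := hwa
  obtain ⟨-, hb⟩ : v ≠ w ∧ (dodecRel (3 * k) v w ∨ dodecRel (3 * k) w v) := hwb
  simp only [genDodec, dodecRel, Fin.ext_iff] at ha hb
  have hu1 := u.1.isLt
  have hv1 := v.1.isLt
  have hw1 := w.1.isLt
  have hu2 := u.2.isLt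
  have hv2 := v.2.isLt
  have hne' : u.1.val ≠ v.1.val ∨ u.2.val ≠ v.2.val := by
    by_contra h
    push_neg at h
    exact hne (Prod.ext (Fin.ext h.1) (Fin.ext h.2))
  have key : ∀ a : ℕ, a < 3 * k →
      (a + 1) % (3 * k) = a + 1 ∨ ((a + 1) % (3 * k) = 0 ∧ a + 1 = 3 * k) := by
    intro a h
    rcases Nat.lt_or_ge (a + 1) (3 * k) with h' | h'
    · exact Or.inl (Nat.mod_eq_of_lt h')
    · have : a + 1 = 3 * k := by omega
      exact Or.inr ⟨by simp [this], this⟩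
  have ku := key u.1.val hu1
  have kv := key v.1.val hv1
  have kw := key w.1.val hw1
  have goal_eq : ∀ t : ℕ, t < 4 →
      (if t = 1 ∨ t = 3 then 0 else 2) = 2 - 2 * (t % 2) := by
    intro t ht
    interval_cases t <;> simp
  simp only [ne_eq, Fin.mk.injEq, goal_eq _ hu2, goal_eq _ hv2]
  rcases ha with (ha | ha | ha | ha | ha | ha) | (ha | ha | ha | ha | ha | ha) <;>
    rcases hb with (hb | hb | hb | hb | hb | hb) | (hb | hb | hb | hb | hb | hb) <;>
    omega
end
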